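/- arXiv:2001.00882 — 3 statements merged into one kernel-verified Lean document; each statement's English description precedes it below -/
import Mathlib

section
/- Assume Conditions (C). Then for any sequence l = l_n > 0 with l = o(n) and any i ∈ {1,2,3}, the partial sum of the l largest weights satisfies Σ_{k=1}^{l} w_k^i = o(n) as n → ∞. -/
set_option maxHeartbeats 1000000


open MeasureTheory Filter Asymptotics
open scoped Classical ENNReal Topology

noncomputable section

/-- `ℓ_n`: the total weight. -/
def ell (w : ∀ n : ℕ, Fin n → ℝ) (n : ℕ) : ℝ := ∑ i, w n i

/-- Conditions (C) on the triangular array of weights, relative to the law `μ` of the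
limiting random variable `W`. -/
structure CondC (w : ∀ n : ℕ, Fin n → ℝ) (μ : Measure ℝ) : Prop where
  isProb : IsProbabilityMeasure μ
  pos : ∀ᵐ x ∂μ, 0 < x
  w_pos : ∀ n, ∀ i : Fin n, 0 < w n i
  w_anti : ∀ n, ∀ i j : Fin n, i ≤ j → w n j ≤ w n i
  int3 : Integrable (fun x => x ^ 3) μ
  moment_eq : ∫ x, x ^ 2 ∂μ = ∫ x, x ∂μ
  weak : ∀ g : BoundedContinuousFunction ℝ ℝ,
    Tendsto (fun n : ℕ => (∑ i : Fin n, g (w n i)) / (n : ℝ)) atTop (𝓝 (∫ x, g x ∂μ))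
  ell_asymp : (fun n : ℕ => ell w n - (∫ x, x ∂μ) * (n : ℝ)) =o[atTop]
      fun n : ℕ => (n : ℝ) ^ ((2 : ℝ) / 3)
  sq_asymp : (fun n : ℕ => (∑ i : Fin n, (w n i) ^ 2) - (∫ x, x ^ 2 ∂μ) * (n : ℝ)) =o[atTop]
      fun n : ℕ => (n : ℝ) ^ ((2 : ℝ) / 3)
  cube_asymp : (fun n : ℕ => (∑ i : Fin n, (w n i) ^ 3) - (∫ x, x ^ 3 ∂μ) * (n : ℝ)) =o[atTop]
      fun _ : ℕ => (1 : ℝ)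
  max_asymp : (fun n : ℕ => ⨆ i : Fin n, w n i) =o[atTop] fun n : ℕ => (n : ℝ) ^ ((1 : ℝ) / 3)

/-- The constant `C = E[W³]/E[W]`. -/
def Cconst (μ : Measure ℝ) : ℝ := (∫ x, x ^ 3 ∂μ) / (∫ x, x ∂μ)

/-- The critical percolation parameter `p_f = (ℓ_n^{1/3} + f_n)/ℓ_n^{4/3}`. -/
def pf (w : ∀ n : ℕ, Fin n → ℝ) (f : ℕ → ℝ) (n : ℕ) : ℝ :=
  (ell w n ^ ((1 : ℝ) / 3) + f n) / ell w n ^ ((4 : ℝ) / 3)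

/-- A Bernoulli-type measure on `Bool` with parameter `p`. -/
def bern (p : ℝ) : Measure Bool :=
  ENNReal.ofReal (1 - p) • Measure.dirac false + ENNReal.ofReal p • Measure.dirac true

/-- The law of the independent edge indicators of the rank-1 inhomogeneous random graph
`G(W,p)`: the indicator attached to the (ordered) pair `(i,j)` is Bernoulli with success
probability `1 - exp (- w i * w j * p)`, all independent. -/
def graphMeasure (n : ℕ) (wn : Fin n → ℝ) (p : ℝ) : Measure (Fin n → Fin n → Bool) :=
  Measure.pi fun i => Measure.pi fun j => bern (1 - Real.exp (-(wn i * wn j * p)))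

/-- The simple graph built from a sample of edge indicators: `i ~ j` iff `i ≠ j` and the
indicator of the pair `(min i j, max i j)` is `true`. -/
def graphOf {n : ℕ} (ω : Fin n → Fin n → Bool) : SimpleGraph (Fin n) :=
  SimpleGraph.fromRel fun i j => ω (min i j) (max i j) = true

/-- The size (number of vertices) of a connected component. -/
def csize {n : ℕ} (G : SimpleGraph (Fin n)) (c : G.ConnectedComponent) : ℕ :=
  Nat.card {v : Fin n // G.connectedComponentMk v = c}

/-- The weight of a connected component: sum of the weights of its vertices. -/
def cweight {n : ℕ} (wn : Fin n → ℝ) (G : SimpleGraph (Fin n)) (c : G.ConnectedComponent) : ℝ :=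
  ∑ v : Fin n, if G.connectedComponentMk v = c then wn v else 0

/-- The number of edges of a connected component. -/
def cedges {n : ℕ} (G : SimpleGraph (Fin n)) (c : G.ConnectedComponent) : ℕ :=
  Nat.card {e : Sym2 (Fin n) // e ∈ G.edgeSet ∧ ∀ v ∈ e, G.connectedComponentMk v = c}

/-- The surplus (excess) of a connected component: edges − vertices + 1. -/
def csurplus {n : ℕ} (G : SimpleGraph (Fin n)) (c : G.ConnectedComponent) : ℤ :=
  (cedges G c : ℤ) - (csize G c : ℤ) + 1

/-- `c` is a largest connected component. -/
def isLargest {n : ℕ} (G : SimpleGraph (Fin n)) (c : G.ConnectedComponent) : Prop :=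
  ∀ c', csize G c' ≤ csize G c

/-- The finset of connected components of a graph on `Fin n`. -/
def comps {n : ℕ} (G : SimpleGraph (Fin n)) : Finset G.ConnectedComponent :=
  Finset.univ.image G.connectedComponentMk

/-- The law of the size-biased random order without replacement `(v(1),…,v(n))`, seen as a
measure on functions `Fin n → Fin n` (supported on permutations `σ`, with
`P(v = σ) = ∏_i w (σ i) / (ℓ_n − ∑_{k<i} w (σ k))`). -/
def sbMeasure (n : ℕ) (wn : Fin n → ℝ) : Measure (Fin n → Fin n) :=
  Measure.sum fun σ : Equiv.Perm (Fin n) =>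
    ENNReal.ofReal (∏ i : Fin n,
        wn (σ i) / ((∑ k, wn k) - ∑ k ∈ Finset.univ.filter fun k => k < i, wn (σ k))) •
      Measure.dirac ⇑σ

/-- The joint law of (edge indicators of `G(W,p)`, size-biased order), the two being
independent. -/
def expMeasure' (n : ℕ) (wn : Fin n → ℝ) (p : ℝ) :
    Measure ((Fin n → Fin n → Bool) × (Fin n → Fin n)) :=
  Measure.sum fun σ : Equiv.Perm (Fin n) =>
    ENNReal.ofReal (∏ i : Fin n,
        wn (σ i) / ((∑ k, wn k) - ∑ k ∈ Finset.univ.filter fun k => k < i, wn (σ k))) •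
      (graphMeasure n wn p).map fun g => (g, ⇑σ)

/-- `sbW wn vord k` is `w_{v(k)}` (1-based), with the conventions `w_{v(0)} = 0` and
`w_{v(k)} = 0` for `k > n`. -/
def sbW {n : ℕ} (wn : Fin n → ℝ) (vord : Fin n → Fin n) (k : ℕ) : ℝ :=
  if h : k - 1 < n then (if k = 0 then 0 else wn (vord ⟨k - 1, h⟩)) else 0

/-- The (0-based) first position, in the order `vord`, of a vertex of the component `c`;
this governs the order in which components are discovered by the breadth-first walk. -/
def firstIdx {n : ℕ} (G : SimpleGraph (Fin n)) (vord : Fin n → Fin n)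
    (c : G.ConnectedComponent) : ℕ :=
  sInf {i : ℕ | ∃ h : i < n, G.connectedComponentMk (vord ⟨i, h⟩) = c}

/-- The number of vertices explored strictly before the exploration of the component `c`
starts: components are explored in the order of their first appearance in `vord`, and the
exploration of `c` occupies the steps `startT c + 1, …, startT c + csize c`. -/
def startT {n : ℕ} (G : SimpleGraph (Fin n)) (vord : Fin n → Fin n)
    (c : G.ConnectedComponent) : ℕ :=
  ∑ v : Fin n, if firstIdx G vord (G.connectedComponentMk v) < firstIdx G vord c then 1 else 0

/-- The state (explored vertices, queue of discovered-but-unexplored vertices) of the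
breadth-first walk after `i` steps; roots are chosen as the first undiscovered vertex in the
order `vord`, and children are queued in the order `vord`. -/
def bfwQueue {n : ℕ} (G : SimpleGraph (Fin n)) (vord : Fin n → Fin n) :
    ℕ → Finset (Fin n) × List (Fin n)
  | 0 => (∅, [])
  | i + 1 =>
    let s := bfwQueue G vord i
    let q : List (Fin n) :=
      if s.2.isEmpty then ((List.ofFn vord).filter fun v => decide (v ∉ s.1)).take 1 else s.2
    match q with
    | [] => (s.1, [])
    | v :: rest =>
      (insert v s.1,
        rest ++ (List.ofFn vord).filter fun u => decide (G.Adj v u ∧ u ∉ s.1 ∧ u ∉ q))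

/-- The reflected exploration process `L` of the breadth-first walk:
`L_0 = 1`, `L_{i+1} = max (L_i + c(i+1) - 1) 1`. -/
def Lproc {n : ℕ} (G : SimpleGraph (Fin n)) (vord : Fin n → Fin n) (i : ℕ) : ℕ :=
  max (bfwQueue G vord i).2.length 1

/-- `discNbrs G vord i` is the number of neighbours of `v(i+1)` (0-based: `vord i`) outside
`{v(1),…,v(i+1)}`, i.e. the increment `X⁰_{i+1} + 1` of the process `L⁰`. -/
def discNbrs {n : ℕ} (G : SimpleGraph (Fin n)) (vord : Fin n → Fin n) (i : ℕ) : ℕ :=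
  Nat.card {j : Fin n // (∃ h : i < n, G.Adj (vord ⟨i, h⟩) j) ∧
    ∀ k : ℕ, ∀ hk : k < n, k ≤ i → vord ⟨k, hk⟩ ≠ j}

/-- The process `L⁰`: `L⁰_0 = 1`, `L⁰_{i+1} = L⁰_i + X⁰_{i+1}` where
`X⁰_{i+1} = ∑_{j ∉ {v(1),…,v(i+1)}} Y(v(i+1), j) − 1`. -/
def L0 {n : ℕ} (G : SimpleGraph (Fin n)) (vord : Fin n → Fin n) (m : ℕ) : ℤ :=
  1 - (m : ℤ) + ∑ i ∈ Finset.range m, (discNbrs G vord i : ℤ)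

/-- The deterministic-drift process `L̃^h`, defined by
`L̃^h_m + m − 1 = ∑_{i=1}^m ∑_{k > i+h} (1 − exp (−w_{v(i)} w_{v(k)} p))`,
the inner sum being over positions `k ≤ n` in the size-biased order. -/
def Ltilde {n : ℕ} (wn : Fin n → ℝ) (p : ℝ) (vord : Fin n → Fin n) (h m : ℕ) : ℝ :=
  1 - (m : ℝ) + ∑ i ∈ Finset.range m,
    if hi : i < n then
      ∑ k : Fin n, if i + h < (k : ℕ) then
        1 - Real.exp (-(wn (vord ⟨i, hi⟩) * wn (vord k) * p)) else 0
    else 0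

/-- The law of the independent exponential clocks `(T_k)_{k ≤ n}`, `T_k` of rate `w_k / ℓ_n`. -/
def clocksMeasure (n : ℕ) (wn : Fin n → ℝ) : Measure (Fin n → ℝ) :=
  Measure.pi fun k => ProbabilityTheory.expMeasure (wn k / ∑ i, wn i)

/-- `N(x)`: the number of clocks that have rung by time `x`. -/
def Nclock {n : ℕ} (x : ℝ) (ω : Fin n → ℝ) : ℕ :=
  ∑ k : Fin n, if ω k ≤ x then 1 else 0

/-- `X(x)`: the total weight of the clocks that have rung by time `x`. -/
def Xclock {n : ℕ} (wn : Fin n → ℝ) (x : ℝ) (ω : Fin n → ℝ) : ℝ :=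
  ∑ k : Fin n, if ω k ≤ x then wn k else 0

/-- Conditions (C2) on a pair of sequences `(a, b)`, relative to the constant `Ā`. -/
structure Cond2 (w : ∀ n : ℕ, Fin n → ℝ) (Abar : ℝ) (a b : ℕ → ℝ) : Prop where
  exp_lt : ∀ᶠ n : ℕ in atTop,
    Real.exp (-(b n) ^ 2 / (Abar * (b n * (n : ℝ) ^ ((1 : ℝ) / 3) + a n))) < 1 / 4
  a_top : Tendsto a atTop atTop
  b_top : Tendsto b atTop atTop
  a_lito : a =o[atTop] fun n : ℕ => (n : ℝ)
  b_bigO : b =O[atTop] a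
  a_bigO : a =O[atTop] fun n => b n * ell w n ^ ((1 : ℝ) / 3)
  a_sq_bigO : (fun n => a n ^ 2) =O[atTop] fun n => b n * ell w n

/-- Conditions (C3) on a quadruple of sequences `(a, b, c, d)`. -/
structure Cond3 (w : ∀ n : ℕ, Fin n → ℝ) (Abar : ℝ) (a b c d : ℕ → ℝ) : Prop where
  sum_lito : (fun n => a n + c n) =o[atTop] fun n : ℕ => (n : ℝ)
  diff_top : Tendsto (fun n => a n - b n) atTop atTop
  d_bigO : d =O[atTop] fun n => a n - b n
  c2 : Cond2 w Abar (fun n => Real.sqrt ((a n - b n) * (a n + c n))) d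

/-- The list of component sizes, sorted in decreasing order. -/
def sizesList {n : ℕ} (G : SimpleGraph (Fin n)) : List ℕ :=
  (((comps G).val.map fun c => csize G c).sort (· ≤ ·)).reverse

/-- `kthSize G k` is the size of the `(k+1)`-st largest connected component of `G`
(`0` if there is no such component). -/
def kthSize {n : ℕ} (G : SimpleGraph (Fin n)) (k : ℕ) : ℕ := (sizesList G).getD k 0

end


private lemma card_filter_lt_le (n m : ℕ) :
    (Finset.univ.filter (fun k : Fin n => (k : ℕ) < m)).card ≤ m := by
  have h : (Finset.univ.filter (fun k : Fin n => (k : ℕ) < m)).card ≤ (Finset.range m).card :=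
    Finset.card_le_card_of_injOn (fun k : Fin n => (k : ℕ))
      (fun a ha => by
        simp only [Finset.mem_coe, Finset.mem_filter] at ha
        exact Finset.mem_range.mpr ha.2)
      (fun a _ b _ hab => Fin.val_injective hab)
  simpa using h

private lemma trunc_integral_tendsto' (μ : Measure ℝ) (hpos : ∀ᵐ x ∂μ, 0 < x)
    (hint : Integrable (fun x => x ^ 3) μ) :
    Tendsto (fun K : ℕ => ∫ x, (min (max x 0) (K : ℝ)) ^ 3 ∂μ) atTop
      (𝓝 (∫ x, x ^ 3 ∂μ)) := by
  apply tendsto_integral_of_dominated_convergence (fun x => ‖x ^ 3‖)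
  · intro K
    exact (((continuous_id.max continuous_const).min continuous_const).pow 3).aestronglyMeasurable
  · exact hint.norm
  · intro K
    filter_upwards [hpos] with x hx
    rw [max_eq_left hx.le]
    have h2 : (0:ℝ) ≤ min x K := le_min hx.le (by positivity)
    rw [Real.norm_eq_abs, Real.norm_eq_abs, abs_of_nonneg (by positivity),
      abs_of_nonneg (by positivity)]
    exact pow_le_pow_left₀ h2 (min_le_left _ _) 3
  · filter_upwards [hpos] with x hx
    rw [max_eq_left hx.le]
    obtain ⟨N, hN⟩ := exists_nat_ge x
    refine Tendsto.congr' ?_ (tendsto_const_nhds (x := x ^ 3))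
    filter_upwards [eventually_ge_atTop N] with K hK
    rw [min_eq_left (hN.trans (by exact_mod_cast hK))]

section
variable (w : ∀ n : ℕ, Fin n → ℝ) (μ : Measure ℝ)

private lemma sum3_littleO
    (hpos : ∀ᵐ x ∂μ, 0 < x)
    (w_pos : ∀ n, ∀ i : Fin n, 0 < w n i)
    (int3 : Integrable (fun x => x ^ 3) μ)
    (weak : ∀ g : BoundedContinuousFunction ℝ ℝ,
      Tendsto (fun n : ℕ => (∑ i : Fin n, g (w n i)) / (n : ℝ)) atTop (𝓝 (∫ x, g x ∂μ)))
    (cube_asymp : (fun n : ℕ => (∑ i : Fin n, (w n i) ^ 3) - (∫ x, x ^ 3 ∂μ) * (n : ℝ))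
      =o[atTop] fun _ : ℕ => (1 : ℝ))
    (l : ℕ → ℕ)
    (hl : (fun n => (l n : ℝ)) =o[atTop] fun n : ℕ => (n : ℝ)) :
    (fun n => ∑ k ∈ Finset.univ.filter (fun k : Fin n => (k : ℕ) < l n), w n k ^ 3)
      =o[atTop] fun n : ℕ => (n : ℝ) := by
  rw [isLittleO_iff]
  intro ε hε
  obtain ⟨K, hK⟩ := Metric.tendsto_atTop.mp (trunc_integral_tendsto' μ hpos int3) (ε/3)
    (by positivity)
  have hK' : ∫ x, x ^ 3 ∂μ - ∫ x, (min (max x 0) (K : ℝ)) ^ 3 ∂μ < ε / 3 := by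
    have h := hK K le_rfl
    rw [Real.dist_eq] at h
    rcases abs_lt.mp h with ⟨h1, h2⟩
    linarith
  set g : BoundedContinuousFunction ℝ ℝ := BoundedContinuousFunction.ofNormedAddCommGroup
    (fun x => (min (max x 0) (K:ℝ))^3)
    (((continuous_id.max continuous_const).min continuous_const).pow 3)
    ((K:ℝ)^3)
    (fun x => by
      have h0 : (0:ℝ) ≤ min (max x 0) K := le_min (le_max_right _ _) (by positivity)
      rw [Real.norm_eq_abs, abs_of_nonneg (by positivity)]
      exact pow_le_pow_left₀ h0 (min_le_right _ _) 3) with hg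
  have hgval : ∀ x : ℝ, g x = (min (max x 0) (K:ℝ))^3 := fun x => rfl
  have hgw : ∀ n (k : Fin n), g (w n k) = (min (w n k) (K:ℝ))^3 := by
    intro n k
    rw [hgval, max_eq_left (w_pos n k).le]
  have hcube : Tendsto (fun n : ℕ => (∑ i : Fin n, (w n i) ^ 3) - (∫ x, x ^ 3 ∂μ) * (n : ℝ))
      atTop (𝓝 0) := (isLittleO_one_iff ℝ).mp cube_asymp
  have h1 : ∀ᶠ n : ℕ in atTop,
      ‖(∑ i : Fin n, (w n i) ^ 3) - (∫ x, x ^ 3 ∂μ) * (n : ℝ)‖ < ε/6 :=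
    (NormedAddCommGroup.tendsto_nhds_zero.mp hcube) (ε/6) (by positivity)
  have h2 : ∀ᶠ n : ℕ in atTop,
      dist ((∑ i : Fin n, g (w n i)) / (n : ℝ)) (∫ x, g x ∂μ) < ε/6 :=
    (Metric.tendsto_nhds.mp (weak g)) (ε/6) (by positivity)
  have h3 : ∀ᶠ n : ℕ in atTop, ‖((l n : ℝ))‖ ≤ (ε/(3*((K:ℝ)^3+1))) * ‖((n:ℝ))‖ :=
    hl.def (by positivity)
  filter_upwards [h1, h2, h3, eventually_ge_atTop 1] with n hn1 hn2 hn3 hn4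
  have hn0 : (0:ℝ) < (n:ℝ) := by exact_mod_cast hn4
  have hn1' : (1:ℝ) ≤ (n:ℝ) := by exact_mod_cast hn4
  have hS0 : 0 ≤ ∑ k ∈ Finset.univ.filter (fun k : Fin n => (k : ℕ) < l n), w n k ^ 3 :=
    Finset.sum_nonneg fun k _ => pow_nonneg (w_pos n k).le 3
  rw [Real.norm_eq_abs, Real.norm_natCast, abs_of_nonneg hS0]
  rw [Real.norm_natCast, Real.norm_natCast] at hn3
  -- main chain
  have hsplit : ∑ k ∈ Finset.univ.filter (fun k : Fin n => (k : ℕ) < l n), w n k ^ 3 ≤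
      (∑ i : Fin n, (w n i ^ 3 - g (w n i))) +
        ∑ k ∈ Finset.univ.filter (fun k : Fin n => (k : ℕ) < l n), g (w n k) := by
    have e1 : ∑ k ∈ Finset.univ.filter (fun k : Fin n => (k : ℕ) < l n), w n k ^ 3 =
        (∑ k ∈ Finset.univ.filter (fun k : Fin n => (k : ℕ) < l n), (w n k ^ 3 - g (w n k))) +
          ∑ k ∈ Finset.univ.filter (fun k : Fin n => (k : ℕ) < l n), g (w n k) := by
      rw [← Finset.sum_add_distrib]
      apply Finset.sum_congr rfl
      intro k _; ring
    rw [e1]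
    have hmono : ∀ k : Fin n, 0 ≤ w n k ^ 3 - g (w n k) := by
      intro k
      rw [hgw]
      have h0 : (0:ℝ) ≤ min (w n k) K := le_min (w_pos n k).le (by positivity)
      have := pow_le_pow_left₀ h0 (min_le_left (w n k) (K:ℝ)) 3
      linarith
    have := Finset.sum_le_sum_of_subset_of_nonneg
      (Finset.filter_subset (fun k : Fin n => (k : ℕ) < l n) Finset.univ)
      (fun k _ _ => hmono k)
    linarith
  have hgsum : ∑ k ∈ Finset.univ.filter (fun k : Fin n => (k : ℕ) < l n), g (w n k) ≤
      (l n : ℝ) * (K:ℝ)^3 := by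
    calc ∑ k ∈ Finset.univ.filter (fun k : Fin n => (k : ℕ) < l n), g (w n k)
        ≤ (Finset.univ.filter (fun k : Fin n => (k : ℕ) < l n)).card • ((K:ℝ)^3) := by
          apply Finset.sum_le_card_nsmul
          intro k _
          rw [hgw]
          have h0 : (0:ℝ) ≤ min (w n k) K := le_min (w_pos n k).le (by positivity)
          exact pow_le_pow_left₀ h0 (min_le_right _ _) 3
      _ ≤ (l n : ℝ) * (K:ℝ)^3 := by
          rw [nsmul_eq_mul]
          have := card_filter_lt_le n (l n)
          have hc : ((Finset.univ.filter (fun k : Fin n => (k : ℕ) < l n)).card : ℝ) ≤ (l n : ℝ) :=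
            by exact_mod_cast this
          nlinarith [pow_nonneg (Nat.cast_nonneg K : (0:ℝ) ≤ K) 3]
  -- bound Σ (w³ - g(w))
  have hsub : ∑ i : Fin n, (w n i ^ 3 - g (w n i)) =
      (∑ i : Fin n, w n i ^ 3) - ∑ i : Fin n, g (w n i) := Finset.sum_sub_distrib _ _
  have hcub' : (∑ i : Fin n, w n i ^ 3) ≤ (∫ x, x ^ 3 ∂μ) * (n:ℝ) + (ε/6) * (n:ℝ) := by
    rcases abs_lt.mp hn1 with ⟨_, h⟩
    nlinarith
  have hg' : (∫ x, g x ∂μ) * (n:ℝ) - (ε/6) * (n:ℝ) ≤ ∑ i : Fin n, g (w n i) := by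
    rw [Real.dist_eq] at hn2
    rcases abs_lt.mp hn2 with ⟨h, _⟩
    have h2 := (lt_div_iff₀ hn0).mp (by linarith : (∫ x, g x ∂μ) - ε/6 < (∑ i : Fin n, g (w n i)) / (n:ℝ))
    nlinarith
  have hK3 : (0:ℝ) ≤ (K:ℝ)^3 := by positivity
  have hc : (ε/(3*((K:ℝ)^3+1))) * (K:ℝ)^3 ≤ ε/3 := by
    rw [div_mul_eq_mul_div, div_le_div_iff₀ (by positivity) (by norm_num)]
    nlinarith
  have hC2 : (l n : ℝ) * (K:ℝ)^3 ≤ (ε/3) * (n:ℝ) := by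
    have q1 := mul_le_mul_of_nonneg_right hn3 hK3
    have q2 := mul_le_mul_of_nonneg_right hc hn0.le
    nlinarith
  have hB : ((∫ x, x ^ 3 ∂μ) - ∫ x, g x ∂μ) * (n:ℝ) ≤ (ε/3) * (n:ℝ) := by
    have hgint : ∫ x, g x ∂μ = ∫ x, (min (max x 0) (K : ℝ)) ^ 3 ∂μ := rfl
    rw [hgint]
    nlinarith
  linarith [hsplit, hgsum, hsub, hcub', hg', hC2, hB]
end

/-- Lemma 1 of the paper: for `l = o(n)` the partial sums of the `l`
largest weights (and their squares and cubes) are `o(n)`. -/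
theorem partial_sum_of_largest_weights_little_o
    (w : ∀ n : ℕ, Fin n → ℝ) (μ : Measure ℝ) (hC : CondC w μ)
    (l : ℕ → ℕ) (hl0 : ∀ n, 0 < l n)
    (hl : (fun n => (l n : ℝ)) =o[atTop] fun n : ℕ => (n : ℝ)) :
    ∀ i : ℕ, i ∈ ({1, 2, 3} : Set ℕ) →
      (fun n => ∑ k ∈ Finset.univ.filter (fun k : Fin n => (k : ℕ) < l n), w n k ^ i)
        =o[atTop] fun n : ℕ => (n : ℝ) := by
  intro i hi
  have h3 := sum3_littleO w μ hC.pos hC.w_pos hC.int3 hC.weak hC.cube_asymp l hl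
  have hbig : (fun n : ℕ =>
      (∑ k ∈ Finset.univ.filter (fun k : Fin n => (k : ℕ) < l n), w n k ^ 3) + 2 * (l n : ℝ))
      =o[atTop] fun n : ℕ => (n : ℝ) := h3.add (hl.const_mul_left 2)
  refine IsBigO.trans_isLittleO ?_ hbig
  apply isBigO_of_le
  intro n
  have hpt : ∀ k : Fin n, w n k ^ i ≤ w n k ^ 3 + 2 := by
    intro k
    have hw := hC.w_pos n k
    simp only [Set.mem_insert_iff, Set.mem_singleton_iff] at hi
    rcases hi with rfl | rfl | rfl
    · nlinarith [sq_nonneg (w n k - 1), sq_nonneg (w n k + 1), sq_nonneg (w n k)]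
    · nlinarith [sq_nonneg (w n k - 1), sq_nonneg (w n k + 1), sq_nonneg (w n k)]
    · linarith
  have hS0 : 0 ≤ ∑ k ∈ Finset.univ.filter (fun k : Fin n => (k : ℕ) < l n), w n k ^ i :=
    Finset.sum_nonneg fun k _ => pow_nonneg (hC.w_pos n k).le i
  have hS3 : 0 ≤ ∑ k ∈ Finset.univ.filter (fun k : Fin n => (k : ℕ) < l n), w n k ^ 3 :=
    Finset.sum_nonneg fun k _ => pow_nonneg (hC.w_pos n k).le 3
  have hcard : ((Finset.univ.filter (fun k : Fin n => (k : ℕ) < l n)).card : ℝ) ≤ (l n : ℝ) := by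
    exact_mod_cast card_filter_lt_le n (l n)
  have hchain : ∑ k ∈ Finset.univ.filter (fun k : Fin n => (k : ℕ) < l n), w n k ^ i ≤
      (∑ k ∈ Finset.univ.filter (fun k : Fin n => (k : ℕ) < l n), w n k ^ 3) + 2 * (l n : ℝ) := by
    calc ∑ k ∈ Finset.univ.filter (fun k : Fin n => (k : ℕ) < l n), w n k ^ i
        ≤ ∑ k ∈ Finset.univ.filter (fun k : Fin n => (k : ℕ) < l n), (w n k ^ 3 + 2) :=
          Finset.sum_le_sum fun k _ => hpt k
      _ = (∑ k ∈ Finset.univ.filter (fun k : Fin n => (k : ℕ) < l n), w n k ^ 3) +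
            ((Finset.univ.filter (fun k : Fin n => (k : ℕ) < l n)).card : ℝ) * 2 := by
          rw [Finset.sum_add_distrib, Finset.sum_const, nsmul_eq_mul]
      _ ≤ (∑ k ∈ Finset.univ.filter (fun k : Fin n => (k : ℕ) < l n), w n k ^ 3) +
            2 * (l n : ℝ) := by linarith
  rw [Real.norm_eq_abs, Real.norm_eq_abs, abs_of_nonneg hS0,
    abs_of_nonneg (by positivity : (0:ℝ) ≤ _ + 2 * (l n : ℝ))]
  exact hchain
end

section
/- Assume Conditions (C). Then for any sequence l = l_n with l = o(n), the weight at position l of the size-biased random order without replacement satisfies E[w_{v(l)}] = 1 + o(1) as n → ∞. -/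
open MeasureTheory Filter Asymptotics
open scoped Classical ENNReal Topology

noncomputable section SBauxSec
namespace SBaux
variable {n : ℕ}

def pw (wn : Fin n → ℝ) : ℝ → List (Fin n) → ℝ
  | _, [] => 1
  | t, a :: r => wn a / t * pw wn (t - wn a) r

@[simp] lemma pw_nil (wn : Fin n → ℝ) (t : ℝ) : pw wn t [] = 1 := rfl
@[simp] lemma pw_cons (wn : Fin n → ℝ) (t : ℝ) (a : Fin n) (r : List (Fin n)) :
    pw wn t (a :: r) = wn a / t * pw wn (t - wn a) r := rfl

def permsOf (S : Finset (Fin n)) : Finset (List (Fin n)) := S.toList.permutations.toFinset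

lemma mem_permsOf {S : Finset (Fin n)} {L : List (Fin n)} :
    L ∈ permsOf S ↔ L.Nodup ∧ L.toFinset = S := by
  rw [permsOf, List.mem_toFinset, List.mem_permutations]
  constructor
  · intro h
    exact ⟨h.nodup_iff.mpr S.nodup_toList, by
      rw [List.toFinset_eq_of_perm _ _ h, Finset.toList_toFinset]⟩
  · rintro ⟨h1, h2⟩
    apply List.perm_of_nodup_nodup_toFinset_eq h1 S.nodup_toList
    rw [h2, Finset.toList_toFinset]

lemma permsOf_empty : permsOf (∅ : Finset (Fin n)) = {[]} := by
  ext L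
  simp only [mem_permsOf, Finset.mem_singleton]
  constructor
  · rintro ⟨h1, h2⟩; exact List.toFinset_eq_empty_iff L |>.mp h2
  · rintro rfl; simp

/-- peel the head off a sum over permutations of a nonempty finset -/
lemma sum_permsOf_nonempty [NeZero n] (f : List (Fin n) → ℝ) {S : Finset (Fin n)}
    (hS : S.Nonempty) :
    ∑ L ∈ permsOf S, f L = ∑ a ∈ S, ∑ r ∈ permsOf (S.erase a), f (a :: r) := by
  rw [Finset.sum_sigma']
  refine Finset.sum_nbij' (i := fun L => (⟨L.headI, L.tail⟩ : (_ : Fin n) × List (Fin n)))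
    (j := fun p => p.1 :: p.2) ?_ ?_ ?_ ?_ ?_
  · intro L hL
    rw [mem_permsOf] at hL
    obtain ⟨hnd, hfs⟩ := hL
    have hne : L ≠ [] := by
      rintro rfl; simp at hfs; exact hS.ne_empty hfs.symm
    obtain ⟨b, t, rfl⟩ := List.exists_cons_of_ne_nil hne
    simp only [List.headI_cons, List.tail_cons, Finset.mem_sigma]
    have hbt : b ∉ t := (List.nodup_cons.mp hnd).1
    constructor
    · rw [← hfs]; simp
    · rw [mem_permsOf]
      refine ⟨(List.nodup_cons.mp hnd).2, ?_⟩
      rw [← hfs]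
      simp only [List.toFinset_cons]
      rw [Finset.erase_insert (by simpa using hbt)]
  · rintro ⟨a, r⟩ hp
    rw [Finset.mem_sigma] at hp
    obtain ⟨ha, hr⟩ := hp
    rw [mem_permsOf] at hr ⊢
    obtain ⟨hnd, hfs⟩ := hr
    have har : a ∉ r := by
      intro h
      have : a ∈ S.erase a := hfs ▸ List.mem_toFinset.mpr h
      simp at this
    exact ⟨List.nodup_cons.mpr ⟨har, hnd⟩, by
      simp only [List.toFinset_cons, hfs, Finset.insert_erase ha]⟩
  · intro L hL
    rw [mem_permsOf] at hL
    have hne : L ≠ [] := by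
      rintro rfl; simp at hL; exact hS.ne_empty hL.symm
    obtain ⟨b, t, rfl⟩ := List.exists_cons_of_ne_nil hne
    rfl
  · rintro ⟨a, r⟩ _; rfl
  · intro L hL
    rw [mem_permsOf] at hL
    have hne : L ≠ [] := by
      rintro rfl; simp at hL; exact hS.ne_empty hL.symm
    obtain ⟨b, t, rfl⟩ := List.exists_cons_of_ne_nil hne
    rfl

variable {wn : Fin n → ℝ}

/-- total mass one -/
lemma sum_pw [NeZero n] (hw : ∀ i, 0 < wn i) (S : Finset (Fin n)) :
    ∑ L ∈ permsOf S, pw wn (∑ a ∈ S, wn a) L = 1 := by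
  induction S using Finset.strongInduction with
  | _ S ih =>
    rcases S.eq_empty_or_nonempty with rfl | hS
    · rw [permsOf_empty]; simp
    · have ht : (0:ℝ) < ∑ a ∈ S, wn a :=
        Finset.sum_pos (fun i _ => hw i) hS
      rw [sum_permsOf_nonempty _ hS]
      have : ∀ a ∈ S, ∑ r ∈ permsOf (S.erase a), pw wn (∑ b ∈ S, wn b) (a :: r)
          = wn a / (∑ b ∈ S, wn b) := by
        intro a ha
        simp only [pw_cons, ← Finset.mul_sum]
        rw [show (∑ b ∈ S, wn b) - wn a = ∑ b ∈ S.erase a, wn b from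
          (Finset.sum_erase_eq_sub ha).symm]
        rw [ih (S.erase a) (Finset.erase_ssubset ha), mul_one]
      rw [Finset.sum_congr rfl this, ← Finset.sum_div, div_self ht.ne']

/-- the conditional mean of the k-th entry -/
def val [NeZero n] (wn : Fin n → ℝ) (S : Finset (Fin n)) (k : ℕ) : ℝ :=
  ∑ L ∈ permsOf S, pw wn (∑ a ∈ S, wn a) L * wn (L.getD k default)

lemma val_zero [NeZero n] (hw : ∀ i, 0 < wn i) {S : Finset (Fin n)} (hS : S.Nonempty) :
    val wn S 0 = (∑ a ∈ S, wn a ^ 2) / (∑ a ∈ S, wn a) := by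
  rw [val, sum_permsOf_nonempty _ hS]
  have key : ∀ a ∈ S, ∑ r ∈ permsOf (S.erase a),
      pw wn (∑ b ∈ S, wn b) (a :: r) * wn ((a :: r).getD 0 default)
      = wn a ^ 2 / (∑ b ∈ S, wn b) := by
    intro a ha
    have : ∀ r ∈ permsOf (S.erase a),
        pw wn (∑ b ∈ S, wn b) (a :: r) * wn ((a :: r).getD 0 default)
        = wn a ^ 2 / (∑ b ∈ S, wn b) * pw wn (∑ b ∈ S.erase a, wn b) r := by
      intro r _
      rw [Finset.sum_erase_eq_sub ha]
      simp only [pw_cons, List.getD_cons_zero]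
      ring
    rw [Finset.sum_congr rfl this, ← Finset.mul_sum, sum_pw hw, mul_one]
  rw [Finset.sum_congr rfl key, ← Finset.sum_div]

lemma val_succ [NeZero n] {S : Finset (Fin n)} (hS : S.Nonempty) (k : ℕ) :
    val wn S (k + 1) = ∑ a ∈ S, wn a / (∑ b ∈ S, wn b) * val wn (S.erase a) k := by
  rw [val, sum_permsOf_nonempty _ hS]
  refine Finset.sum_congr rfl fun a ha => ?_
  rw [val, Finset.mul_sum, Finset.sum_erase_eq_sub ha]
  refine Finset.sum_congr rfl fun r hr => ?_
  simp only [pw_cons, List.getD_cons_succ]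
  ring

lemma nonempty_of_sdiff_card {S : Finset (Fin n)} {m : ℕ} (hmn : m < n)
    (h : (Finset.univ \ S).card ≤ m) : S.Nonempty := by
  rcases S.eq_empty_or_nonempty with rfl | h'
  · simp at h; omega
  · exact h'

lemma val_mem [NeZero n] (hw : ∀ i, 0 < wn i) (m : ℕ) (hmn : m < n) (lo hi : ℝ)
    (hbase : ∀ S : Finset (Fin n), S.Nonempty → (Finset.univ \ S).card ≤ m →
      lo ≤ (∑ a ∈ S, wn a ^ 2) / (∑ a ∈ S, wn a) ∧
        (∑ a ∈ S, wn a ^ 2) / (∑ a ∈ S, wn a) ≤ hi) :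
    ∀ k (S : Finset (Fin n)), (Finset.univ \ S).card + k ≤ m →
      lo ≤ val wn S k ∧ val wn S k ≤ hi := by
  intro k
  induction k with
  | zero =>
    intro S hcard
    have hS : S.Nonempty := nonempty_of_sdiff_card hmn (by omega)
    rw [val_zero hw hS]
    exact hbase S hS (by omega)
  | succ k ih =>
    intro S hcard
    have hS : S.Nonempty := nonempty_of_sdiff_card hmn (by omega)
    have ht : (0:ℝ) < ∑ b ∈ S, wn b := Finset.sum_pos (fun i _ => hw i) hS
    rw [val_succ hS]
    have hcoeff : ∀ a ∈ S, 0 ≤ wn a / (∑ b ∈ S, wn b) :=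
      fun a _ => div_nonneg (hw a).le ht.le
    have hsum1 : ∑ a ∈ S, wn a / (∑ b ∈ S, wn b) = 1 := by
      rw [← Finset.sum_div, div_self ht.ne']
    have hrec : ∀ a ∈ S, lo ≤ val wn (S.erase a) k ∧ val wn (S.erase a) k ≤ hi := by
      intro a ha
      apply ih
      have : (Finset.univ \ S.erase a).card = (Finset.univ \ S).card + 1 := by
        rw [Finset.sdiff_erase (Finset.mem_univ a),
          Finset.card_insert_of_notMem (by simp [ha])]
      omega
    constructor
    · calc lo = ∑ a ∈ S, wn a / (∑ b ∈ S, wn b) * lo := by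
            rw [← Finset.sum_mul, hsum1, one_mul]
        _ ≤ _ := Finset.sum_le_sum fun a ha =>
            mul_le_mul_of_nonneg_left (hrec a ha).1 (hcoeff a ha)
    · calc _ ≤ ∑ a ∈ S, wn a / (∑ b ∈ S, wn b) * hi := Finset.sum_le_sum fun a ha =>
            mul_le_mul_of_nonneg_left (hrec a ha).2 (hcoeff a ha)
        _ = hi := by rw [← Finset.sum_mul, hsum1, one_mul]

lemma pw_eq_prod [NeZero n] (t : ℝ) (L : List (Fin n)) :
    pw wn t L = ∏ i ∈ Finset.range L.length,
      wn (L.getD i default) / (t - ∑ j ∈ Finset.range i, wn (L.getD j default)) := by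
  induction L generalizing t with
  | nil => simp
  | cons a r ih =>
    rw [pw_cons, ih (t - wn a), List.length_cons, Finset.prod_range_succ']
    simp only [List.getD_cons_succ, List.getD_cons_zero, Finset.range_zero,
      Finset.sum_empty, sub_zero]
    rw [mul_comm]
    congr 1
    refine Finset.prod_congr rfl fun i _ => ?_
    congr 1
    rw [Finset.sum_range_succ']
    simp only [List.getD_cons_succ, List.getD_cons_zero]
    ring

lemma sum_filter_lt (g : Fin n → ℝ) (i : Fin n) :
    ∑ k ∈ Finset.univ.filter fun k => k < i, g k
      = ∑ j ∈ Finset.range i.val, if h : j < n then g ⟨j, h⟩ else 0 := by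
  refine Finset.sum_nbij' (i := fun k : Fin n => (k : ℕ))
    (j := fun j => if h : j < n then (⟨j, h⟩ : Fin n) else i) ?_ ?_ ?_ ?_ ?_
  · intro k hk
    simp only [Finset.mem_filter, Finset.mem_univ, true_and] at hk
    exact Finset.mem_range.mpr hk
  · intro j hj
    have hj' : j < i.val := Finset.mem_range.mp hj
    have hjn : j < n := hj'.trans i.isLt
    simp only [dif_pos hjn, Finset.mem_filter, Finset.mem_univ, true_and]
    exact hj'
  · intro k _; simp [k.isLt]
  · intro j hj
    have hjn : j < n := (Finset.mem_range.mp hj).trans i.isLt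
    simp only [dif_pos hjn]
  · intro k _; simp [k.isLt]

lemma c_eq_pw [NeZero n] (σ : Equiv.Perm (Fin n)) (t : ℝ) :
    (∏ i : Fin n, wn (σ i) /
        (t - ∑ k ∈ Finset.univ.filter fun k => k < i, wn (σ k)))
      = pw wn t (List.ofFn ⇑σ) := by
  rw [pw_eq_prod, List.length_ofFn,
    ← Fin.prod_univ_eq_prod_range (fun i : ℕ =>
      wn ((List.ofFn ⇑σ).getD i default) /
        (t - ∑ j ∈ Finset.range i, wn ((List.ofFn ⇑σ).getD j default))) n]
  refine Finset.prod_congr rfl fun i _ => ?_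
  have hget : ∀ (j : ℕ) (hj : j < n), (List.ofFn ⇑σ).getD j default = σ ⟨j, hj⟩ := by
    intro j hj
    rw [List.getD_eq_getElem _ _ (by simpa using hj), List.getElem_ofFn]
  rw [hget i.val i.isLt, Fin.eta]
  have : ∑ k ∈ Finset.univ.filter (fun k => k < i), wn (σ k)
      = ∑ j ∈ Finset.range i.val, wn ((List.ofFn ⇑σ).getD j default) := by
    rw [sum_filter_lt (fun k => wn (σ k)) i]
    refine Finset.sum_congr rfl fun j hj => ?_
    have hjn : j < n := (Finset.mem_range.mp hj).trans i.isLt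
    rw [hget j hjn]
    simp only [dif_pos hjn]
  rw [this]

lemma sum_perm_eq_val [NeZero n] (k : ℕ) (hk : k < n) :
    ∑ σ : Equiv.Perm (Fin n),
      (∏ i : Fin n, wn (σ i) /
        ((∑ j, wn j) - ∑ j ∈ Finset.univ.filter fun j => j < i, wn (σ j))) * wn (σ ⟨k, hk⟩)
      = val wn Finset.univ k := by
  rw [val]
  refine Finset.sum_bij (i := fun σ _ => List.ofFn ⇑σ) ?_ ?_ ?_ ?_
  · intro σ _
    rw [mem_permsOf]
    constructor
    · exact List.nodup_ofFn.mpr σ.injective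
    · ext x
      simp [List.mem_ofFn, σ.surjective x]
  · intro σ _ τ _ h
    exact Equiv.coe_fn_injective (List.ofFn_injective h)
  · intro L hL
    rw [mem_permsOf] at hL
    obtain ⟨hnd, hfs⟩ := hL
    have hlen : L.length = n := by
      have := List.toFinset_card_of_nodup hnd
      rw [hfs] at this
      simpa using this.symm
    have hinj : Function.Injective fun i : Fin n => L.get (Fin.cast hlen.symm i) :=
      fun a b hab => by
        have := List.nodup_iff_injective_get.mp hnd hab
        exact Fin.cast_injective _ this
    refine ⟨Equiv.ofBijective _ (Finite.injective_iff_bijective.mp hinj), Finset.mem_univ _, ?_⟩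
    apply List.ext_get (by simp [hlen])
    intro i h1 h2
    simp only [List.get_ofFn]
    rfl
  · intro σ _
    rw [c_eq_pw]
    congr 2
    rw [List.getD_eq_getElem _ _ (by simpa using hk), List.getElem_ofFn]
end SBaux

end SBauxSec

noncomputable section SBaux2
namespace SBaux
variable {n : ℕ} {wn : Fin n → ℝ}

lemma c_pos (hw : ∀ i, 0 < wn i) (σ : Equiv.Perm (Fin n)) :
    0 < ∏ i : Fin n, wn (σ i) /
      ((∑ k, wn k) - ∑ k ∈ Finset.univ.filter fun k => k < i, wn (σ k)) := by
  apply Finset.prod_pos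
  intro i _
  apply div_pos (hw _)
  have h1 : ∑ k ∈ Finset.univ.filter (fun k => k < i), wn (σ k)
      ≤ ∑ k ∈ Finset.univ.erase i, wn (σ k) :=
    Finset.sum_le_sum_of_subset_of_nonneg
      (fun k hk => Finset.mem_erase.mpr ⟨(Finset.mem_filter.mp hk).2.ne, Finset.mem_univ _⟩)
      (fun k _ _ => (hw _).le)
  have h2 : ∑ k ∈ Finset.univ.erase i, wn (σ k) = (∑ k, wn k) - wn (σ i) := by
    rw [Finset.sum_erase_eq_sub (Finset.mem_univ i), Equiv.sum_comp σ wn]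
  linarith [hw (σ i)]

instance sb_finite {α : Type*} [MeasurableSpace α] {ι : Type*} [Fintype ι]
    (c : ι → ℝ) (x : ι → α) :
    IsFiniteMeasure (Measure.sum fun i => ENNReal.ofReal (c i) • Measure.dirac (x i)) := by
  constructor
  rw [Measure.sum_apply _ MeasurableSet.univ, tsum_fintype]
  apply ENNReal.sum_lt_top.mpr
  intro σ _
  simp [Measure.smul_apply]

lemma integral_sb [NeZero n] (hw : ∀ i, 0 < wn i) (k : ℕ) (h1 : 1 ≤ k) (hk : k - 1 < n) :
    ∫ ω, sbW wn ω k ∂sbMeasure n wn = val wn Finset.univ (k - 1) := by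
  rw [sbMeasure, integral_sum_measure (Integrable.of_finite), tsum_fintype]
  rw [← sum_perm_eq_val (k - 1) hk]
  refine Finset.sum_congr rfl fun σ _ => ?_
  rw [integral_smul_measure, integral_dirac, smul_eq_mul,
    ENNReal.toReal_ofReal (c_pos hw σ).le]
  congr 1
  rw [sbW, dif_pos hk, if_neg (by omega)]
end SBaux
end SBaux2

noncomputable section SBaux3
namespace SBaux
open MeasureTheory Filter Asymptotics
open scoped Topology

lemma nat_rpow_bigO : (fun n : ℕ => ((n:ℝ))^((2:ℝ)/3)) =O[atTop] (fun n : ℕ => (n:ℝ)) := by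
  apply IsBigO.of_bound 1
  filter_upwards [eventually_ge_atTop 1] with n hn
  have h1 : (1:ℝ) ≤ (n:ℝ) := by exact_mod_cast hn
  rw [Real.norm_eq_abs, Real.norm_eq_abs, abs_of_nonneg (by positivity),
    abs_of_nonneg (by positivity), one_mul]
  calc ((n:ℝ))^((2:ℝ)/3) ≤ ((n:ℝ))^(1:ℝ) :=
        Real.rpow_le_rpow_of_exponent_le h1 (by norm_num)
    _ = (n:ℝ) := Real.rpow_one _

lemma tendsto_div_of_sub_littleO {F : ℕ → ℝ} {c : ℝ}
    (h : (fun n => F n - c * n) =o[atTop] fun n : ℕ => (n:ℝ)) :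
    Tendsto (fun n => F n / n) atTop (𝓝 c) := by
  have h0 : Tendsto (fun n : ℕ => (F n - c * n)/n) atTop (𝓝 0) :=
    h.tendsto_div_nhds_zero
  have h1 := h0.add_const c
  rw [zero_add] at h1
  apply h1.congr'
  filter_upwards [eventually_ge_atTop 1] with n hn
  have : (n:ℝ) ≠ 0 := by positivity
  field_simp
  ring

lemma tendsto_div_of_sub_littleO' {F : ℕ → ℝ} {c : ℝ}
    (h : (fun n => F n - c * n) =o[atTop] fun n : ℕ => ((n:ℝ))^((2:ℝ)/3)) :
    Tendsto (fun n => F n / n) atTop (𝓝 c) :=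
  tendsto_div_of_sub_littleO (h.trans_isBigO nat_rpow_bigO)

lemma tendsto_div_of_sub_littleO_one {F : ℕ → ℝ} {c : ℝ}
    (h : (fun n => F n - c * n) =o[atTop] fun _ : ℕ => (1:ℝ)) :
    Tendsto (fun n => F n / n) atTop (𝓝 c) := by
  apply tendsto_div_of_sub_littleO
  refine h.trans_isBigO (IsBigO.of_bound 1 ?_)
  filter_upwards [eventually_ge_atTop 1] with n hn
  have h1 : (1:ℝ) ≤ (n:ℝ) := by exact_mod_cast hn
  simpa using h1

end SBaux
end SBaux3
set_option maxHeartbeats 1600000 in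
/-- Lemma of the paper: `E[w_{v(l)}] = 1 + o(1)` for `l = o(n)`. -/
theorem mean_size_biased_weight
    (w : ∀ n : ℕ, Fin n → ℝ) (μ : Measure ℝ) (hC : CondC w μ)
    (l : ℕ → ℕ) (hl0 : ∀ n, 1 ≤ l n)
    (hl : (fun n => (l n : ℝ)) =o[atTop] fun n : ℕ => (n : ℝ)) :
    (fun n => (∫ ω, sbW (w n) ω (l n) ∂sbMeasure n (w n)) - 1) =o[atTop]
      fun _ : ℕ => (1 : ℝ) := by
  classical
  haveI := hC.isProb
  set EW : ℝ := ∫ x, x ∂μ with hEWdef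
  set E3 : ℝ := ∫ x, x ^ 3 ∂μ with hE3def
  have hint1 : Integrable (fun x : ℝ => x) μ := by
    refine Integrable.mono ((integrable_const (1:ℝ)).add hC.int3.abs)
      measurable_id.aestronglyMeasurable ?_
    filter_upwards with x
    simp only [Pi.add_apply, Real.norm_eq_abs]
    rw [abs_of_nonneg (show (0:ℝ) ≤ 1 + |x ^ 3| by positivity), abs_pow]
    nlinarith [abs_nonneg x, sq_nonneg (|x| - 1),
      mul_nonneg (mul_nonneg (abs_nonneg x) (abs_nonneg x)) (abs_nonneg x),
      mul_nonneg (sq_nonneg (|x| - 1)) (abs_nonneg x)]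
  have hEWpos : 0 < EW := by
    rw [hEWdef, integral_pos_iff_support_of_nonneg_ae
      (by filter_upwards [hC.pos] with x hx; exact hx.le) hint1]
    rw [pos_iff_ne_zero]
    intro h
    have h2 : ∀ᵐ x ∂μ, x ∉ Function.support (fun x : ℝ => x) :=
      measure_eq_zero_iff_ae_notMem.mp h
    obtain ⟨x, hx1, hx2⟩ := (hC.pos.and h2).exists
    exact hx2 (by simpa [Function.mem_support] using hx1.ne')
  set T1 : ℕ → ℝ := ell w with hT1def
  set T2 : ℕ → ℝ := fun n => ∑ i : Fin n, (w n i) ^ 2 with hT2def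
  set T3 : ℕ → ℝ := fun n => ∑ i : Fin n, (w n i) ^ 3 with hT3def
  have hT1 : Tendsto (fun n => T1 n / n) atTop (𝓝 EW) :=
    SBaux.tendsto_div_of_sub_littleO' hC.ell_asymp
  have hT2 : Tendsto (fun n => T2 n / n) atTop (𝓝 EW) := by
    have h := hC.sq_asymp
    rw [hC.moment_eq] at h
    exact SBaux.tendsto_div_of_sub_littleO' h
  have hT3 : Tendsto (fun n => T3 n / n) atTop (𝓝 E3) :=
    SBaux.tendsto_div_of_sub_littleO_one hC.cube_asymp
  have hln : Tendsto (fun n => (l n : ℝ) / n) atTop (𝓝 0) :=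
    hl.tendsto_div_nhds_zero
  have hT3nonneg : ∀ n, 0 ≤ T3 n :=
    fun n => Finset.sum_nonneg fun i _ => pow_nonneg (hC.w_pos n i).le 3
  have hT2nonneg : ∀ n, 0 ≤ T2 n :=
    fun n => Finset.sum_nonneg fun i _ => pow_nonneg (hC.w_pos n i).le 2
  set A : ℕ → ℝ := fun n => ((l n : ℝ) ^ 2 * T3 n) ^ ((1:ℝ)/3) with hAdef
  set B : ℕ → ℝ := fun n => Real.sqrt (A n * T3 n) with hBdef
  have hAnonneg : ∀ n, 0 ≤ A n := by
    intro n
    simp only [hAdef]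
    exact Real.rpow_nonneg (mul_nonneg (sq_nonneg _) (hT3nonneg n)) _
  have hBnonneg : ∀ n, 0 ≤ B n := fun n => Real.sqrt_nonneg _
  have hA : Tendsto (fun n => A n / n) atTop (𝓝 0) := by
    have hbase : Tendsto (fun n => ((l n : ℝ)/n) ^ 2 * (T3 n / n)) atTop (𝓝 0) := by
      have := (hln.pow 2).mul hT3
      simpa using this
    have hcont : ContinuousAt (fun x : ℝ => x ^ ((1:ℝ)/3)) 0 :=
      Real.continuousAt_rpow_const 0 _ (Or.inr (by norm_num))
    have hcomp := hcont.tendsto.comp hbase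
    rw [Real.zero_rpow (by norm_num : (1:ℝ)/3 ≠ 0)] at hcomp
    apply hcomp.congr'
    filter_upwards [eventually_ge_atTop 1] with n hn
    have hn0 : (0:ℝ) < n := by exact_mod_cast hn
    show (((l n : ℝ)/n) ^ 2 * (T3 n / n)) ^ ((1:ℝ)/3) = A n / n
    simp only [hAdef]
    rw [show ((l n : ℝ)/n) ^ 2 * (T3 n / n) = ((l n : ℝ) ^ 2 * T3 n) / (n:ℝ) ^ (3:ℕ) by
      rw [div_pow, div_mul_div_comm]; ring_nf]
    rw [Real.div_rpow (mul_nonneg (sq_nonneg _) (hT3nonneg n)) (by positivity)]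
    congr 1
    rw [← Real.rpow_natCast ((n:ℝ)) 3, ← Real.rpow_mul hn0.le]
    norm_num
  have hB : Tendsto (fun n => B n / n) atTop (𝓝 0) := by
    have hbase : Tendsto (fun n => (A n / n) * (T3 n / n)) atTop (𝓝 0) := by
      simpa using hA.mul hT3
    have hcomp := (Real.continuous_sqrt.tendsto 0).comp hbase
    rw [Real.sqrt_zero] at hcomp
    apply hcomp.congr'
    filter_upwards [eventually_ge_atTop 1] with n hn
    have hn0 : (0:ℝ) < n := by exact_mod_cast hn
    show Real.sqrt ((A n / n) * (T3 n / n)) = B n / n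
    simp only [hBdef]
    rw [show (A n / n) * (T3 n / n) = (A n * T3 n) / (n:ℝ) ^ 2 by
      rw [div_mul_div_comm]; ring_nf]
    rw [Real.sqrt_div' _ (by positivity), Real.sqrt_sq hn0.le]
  have hT1A : Tendsto (fun n => (T1 n - A n) / n) atTop (𝓝 EW) := by
    have h := hT1.sub hA
    rw [sub_zero] at h
    exact h.congr fun n => by ring
  have hT2B : Tendsto (fun n => (T2 n - B n) / n) atTop (𝓝 EW) := by
    have h := hT2.sub hB
    rw [sub_zero] at h
    exact h.congr fun n => by ring
  have epos1 : ∀ᶠ n : ℕ in atTop, EW/2 * n ≤ T1 n - A n := by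
    filter_upwards [hT1A.eventually (lt_mem_nhds (half_lt_self hEWpos)),
      eventually_ge_atTop 1] with n h1 h2
    have hn0 : (0:ℝ) < n := by exact_mod_cast h2
    rw [lt_div_iff₀ hn0] at h1
    linarith
  have epos2 : ∀ᶠ n : ℕ in atTop, EW/2 * n ≤ T2 n - B n := by
    filter_upwards [hT2B.eventually (lt_mem_nhds (half_lt_self hEWpos)),
      eventually_ge_atTop 1] with n h1 h2
    have hn0 : (0:ℝ) < n := by exact_mod_cast h2
    rw [lt_div_iff₀ hn0] at h1
    linarith
  have elln : ∀ᶠ n : ℕ in atTop, l n < n := by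
    filter_upwards [hln.eventually (gt_mem_nhds one_pos), eventually_ge_atTop 1]
      with n h1 h2
    have hn0 : (0:ℝ) < n := by exact_mod_cast h2
    rw [div_lt_one hn0] at h1
    exact_mod_cast h1
  have hT1posE : ∀ᶠ n : ℕ in atTop, 0 < T1 n := by
    filter_upwards [epos1, eventually_ge_atTop 1] with n h1 h2
    have hn0 : (0:ℝ) < n := by exact_mod_cast h2
    have := hAnonneg n
    nlinarith [hEWpos]
  have hlo1 : Tendsto (fun n => (T2 n - B n) / T1 n) atTop (𝓝 1) := by
    have h1 := hT2B.div hT1 hEWpos.ne'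
    rw [div_self hEWpos.ne'] at h1
    apply h1.congr'
    filter_upwards [eventually_ge_atTop 1, hT1posE] with n hn hpos
    have hn0 : (n:ℝ) ≠ 0 := by positivity
    simp only [Pi.div_apply]
    field_simp
  have hhi1 : Tendsto (fun n => T2 n / (T1 n - A n)) atTop (𝓝 1) := by
    have h1 := hT2.div hT1A hEWpos.ne'
    rw [div_self hEWpos.ne'] at h1
    apply h1.congr'
    filter_upwards [eventually_ge_atTop 1, epos1] with n hn hpos
    have hn1 : (0:ℝ) < n := by exact_mod_cast hn
    have hn0 : (n:ℝ) ≠ 0 := hn1.ne'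
    have hTA : T1 n - A n ≠ 0 := by nlinarith [hEWpos]
    simp only [Pi.div_apply]
    field_simp
  set Sfun : ℕ → ℝ := fun n => ∫ ω, sbW (w n) ω (l n) ∂sbMeasure n (w n) with hSfun
  have hmain : ∀ᶠ n : ℕ in atTop,
      (T2 n - B n) / T1 n ≤ Sfun n ∧ Sfun n ≤ T2 n / (T1 n - A n) := by
    filter_upwards [eventually_ge_atTop 1, elln, epos1, epos2] with n hn1 hln' hp1 hp2
    haveI : NeZero n := ⟨by omega⟩
    have hw : ∀ i : Fin n, 0 < w n i := hC.w_pos n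
    have hk : l n - 1 < n := by omega
    have hn0 : (0:ℝ) < n := by exact_mod_cast hn1
    have hT1Apos : 0 < T1 n - A n := lt_of_lt_of_le (mul_pos (half_pos hEWpos) hn0) hp1
    have hT2Bnn : 0 ≤ T2 n - B n := le_trans (mul_nonneg (half_pos hEWpos).le hn0.le) hp2
    have hT1pos : 0 < T1 n := by have := hAnonneg n; linarith
    have hval : Sfun n = SBaux.val (w n) Finset.univ (l n - 1) := by
      rw [hSfun]
      exact SBaux.integral_sb hw (l n) (hl0 n) hk
    rw [hval]
    refine SBaux.val_mem hw (l n - 1) hk _ _ ?_ (l n - 1) Finset.univ (by simp)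
    intro S hSne hScard
    have hsCnn : 0 ≤ ∑ a ∈ Finset.univ \ S, w n a :=
      Finset.sum_nonneg fun i _ => (hw i).le
    have hsC2nn : 0 ≤ ∑ a ∈ Finset.univ \ S, (w n a) ^ 2 :=
      Finset.sum_nonneg fun i _ => by positivity
    have hsC3nn : 0 ≤ ∑ a ∈ Finset.univ \ S, (w n a) ^ 3 :=
      Finset.sum_nonneg fun i _ => pow_nonneg (hw i).le 3
    have hsC3 : ∑ a ∈ Finset.univ \ S, (w n a) ^ 3 ≤ T3 n :=
      Finset.sum_le_sum_of_subset_of_nonneg (Finset.subset_univ _)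
        fun i _ _ => pow_nonneg (hw i).le 3
    have hcardR : ((Finset.univ \ S).card : ℝ) ≤ (l n : ℝ) := by
      exact_mod_cast le_trans hScard (Nat.sub_le _ _)
    have hcardnn : (0:ℝ) ≤ ((Finset.univ \ S).card : ℝ) := Nat.cast_nonneg _
    -- bound on the removed weight
    have hsC : ∑ a ∈ Finset.univ \ S, w n a ≤ A n := by
      rcases Nat.eq_zero_or_pos (Finset.univ \ S).card with hc0 | hcpos
      · have he : Finset.univ \ S = ∅ := Finset.card_eq_zero.mp hc0
        rw [he]
        simpa using hAnonneg n
      · have hpm := pow_sum_div_card_le_sum_pow (s := Finset.univ \ S)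
          (f := w n) (fun i _ => (hw i).le) 2
        have hcard0 : (0:ℝ) < ((Finset.univ \ S).card : ℝ) ^ 2 := by
          have : (0:ℝ) < ((Finset.univ \ S).card : ℝ) := by exact_mod_cast hcpos
          positivity
        rw [div_le_iff₀ hcard0] at hpm
        have h1 : (∑ a ∈ Finset.univ \ S, w n a) ^ 3 ≤ (l n : ℝ) ^ 2 * T3 n := by
          calc (∑ a ∈ Finset.univ \ S, w n a) ^ (2+1)
              ≤ (∑ a ∈ Finset.univ \ S, (w n a) ^ (2+1)) *
                  ((Finset.univ \ S).card : ℝ) ^ 2 := hpm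
            _ ≤ T3 n * (l n : ℝ) ^ 2 :=
                mul_le_mul hsC3 (by nlinarith) (by positivity) (hT3nonneg n)
            _ = (l n : ℝ) ^ 2 * T3 n := mul_comm _ _
        calc ∑ a ∈ Finset.univ \ S, w n a
            = ((∑ a ∈ Finset.univ \ S, w n a) ^ (3:ℕ)) ^ ((1:ℝ)/3) := by
              rw [← Real.rpow_natCast (∑ a ∈ Finset.univ \ S, w n a) 3,
                ← Real.rpow_mul hsCnn]
              norm_num
          _ ≤ ((l n : ℝ) ^ 2 * T3 n) ^ ((1:ℝ)/3) :=
              Real.rpow_le_rpow (by positivity) h1 (by norm_num)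
          _ = A n := by simp only [hAdef]
    -- bound on the removed squared weight
    have hsC2B : ∑ a ∈ Finset.univ \ S, (w n a) ^ 2 ≤ B n := by
      have hcs := Finset.sum_sq_le_sum_mul_sum_of_sq_eq_mul (Finset.univ \ S)
        (r := fun i => (w n i) ^ 2) (f := w n) (g := fun i => (w n i) ^ 3)
        (fun i _ => (hw i).le) (fun i _ => pow_nonneg (hw i).le 3) (fun i _ => by ring)
      have h2 : (∑ a ∈ Finset.univ \ S, (w n a) ^ 2) ^ 2 ≤ A n * T3 n :=
        le_trans hcs (mul_le_mul hsC hsC3 hsC3nn (hAnonneg n))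
      calc ∑ a ∈ Finset.univ \ S, (w n a) ^ 2
          = Real.sqrt ((∑ a ∈ Finset.univ \ S, (w n a) ^ 2) ^ 2) :=
            (Real.sqrt_sq hsC2nn).symm
        _ ≤ Real.sqrt (A n * T3 n) := Real.sqrt_le_sqrt h2
        _ = B n := by simp only [hBdef]
    have hSsum : ∑ a ∈ S, w n a = T1 n - ∑ a ∈ Finset.univ \ S, w n a := by
      have h := Finset.sum_sdiff_eq_sub (f := w n) (Finset.subset_univ S)
      have hT1eq : T1 n = ∑ a, w n a := rfl
      linarith
    have hSsum2 : ∑ a ∈ S, (w n a) ^ 2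
        = T2 n - ∑ a ∈ Finset.univ \ S, (w n a) ^ 2 := by
      have h := Finset.sum_sdiff_eq_sub (f := fun a => (w n a) ^ 2)
        (Finset.subset_univ S)
      have hT2eq : T2 n = ∑ a, (w n a) ^ 2 := rfl
      linarith
    have hT1sC : 0 < T1 n - ∑ a ∈ Finset.univ \ S, w n a := by linarith
    constructor
    · rw [hSsum, hSsum2]
      exact div_le_div₀ (by linarith) (by linarith) hT1sC (by linarith)
    · rw [hSsum, hSsum2]
      exact div_le_div₀ (hT2nonneg n) (by linarith) hT1Apos (by linarith)
  have hStend : Tendsto Sfun atTop (𝓝 1) :=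
    tendsto_of_tendsto_of_tendsto_of_le_of_le' hlo1 hhi1
      (hmain.mono fun n h => h.1) (hmain.mono fun n h => h.2)
  rw [Asymptotics.isLittleO_one_iff]
  simpa using hStend.sub_const 1
end

section
/- Assume Conditions (C) and set C = E[W³]/E[W]. Then for any sequence l = l_n with l = o(n), the weight at position l of the size-biased random order without replacement satisfies E[w_{v(l)}²] = C + o(1) as n → ∞. -/
open MeasureTheory Filter Asymptotics
open scoped Classical ENNReal Topology

/-! ### Auxiliary development for the proof -/

noncomputable section AuxProof

section ListMachinery
variable {α : Type*} [DecidableEq α]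

/-- The probability of drawing the list `L` in size-biased order, written recursively via
suffix sums. -/
noncomputable def prW (w : α → ℝ) : List α → ℝ
  | [] => 1
  | a :: t => (w a / (w a + (t.map w).sum)) * prW w t

/-- The finset of all orderings (lists) of the finset `s`. -/
noncomputable def ordsF (s : Finset α) : Finset (List α) := s.val.toList.permutations.toFinset

lemma mem_ordsF {s : Finset α} {L : List α} : L ∈ ordsF s ↔ L.Perm s.val.toList := by
  simp [ordsF, List.mem_toFinset, List.mem_permutations]

lemma ordsF_empty : ordsF (∅ : Finset α) = {[]} := by
  ext L
  simp only [mem_ordsF, Finset.mem_singleton]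
  rw [show (∅ : Finset α).val.toList = [] by simp [Multiset.toList_zero]]
  constructor
  · exact fun h => h.eq_nil
  · rintro rfl; exact List.Perm.refl _

lemma erase_toList_perm (s : Finset α) (a : α) :
    (s.val.toList.erase a).Perm (s.erase a).val.toList := by
  rw [← Multiset.coe_eq_coe, ← Multiset.coe_erase, Multiset.coe_toList, Multiset.coe_toList,
    Finset.erase_val]

lemma ordsF_eq_biUnion {s : Finset α} (hs : s.Nonempty) :
    ordsF s = s.biUnion fun a => (ordsF (s.erase a)).image (a :: ·) := by
  ext L
  simp only [mem_ordsF, Finset.mem_biUnion, Finset.mem_image]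
  constructor
  · intro hL
    have hne : L ≠ [] := by
      intro h; subst h
      have := hL.length_eq
      simp only [List.length_nil] at this
      have hcard : s.card ≠ 0 := Finset.card_ne_zero_of_mem hs.choose_spec
      rw [← Finset.length_toList] at hcard
      rw [Finset.toList] at hcard
      exact hcard this.symm
    obtain ⟨a, T, rfl⟩ := List.exists_cons_of_ne_nil hne
    have h2 := (List.cons_perm_iff_perm_erase).1 hL
    have ha : a ∈ s := by
      have := h2.1
      simpa [Multiset.mem_toList] using this
    exact ⟨a, ha, T, h2.2.trans (erase_toList_perm s a), rfl⟩
  · rintro ⟨a, ha, T, hT, rfl⟩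
    rw [List.cons_perm_iff_perm_erase]
    refine ⟨by simpa [Multiset.mem_toList] using ha, hT.trans (erase_toList_perm s a).symm⟩

lemma sum_ordsF_decomp (F : List α → ℝ) {s : Finset α} (hs : s.Nonempty) :
    ∑ L ∈ ordsF s, F L = ∑ a ∈ s, ∑ T ∈ ordsF (s.erase a), F (a :: T) := by
  rw [ordsF_eq_biUnion hs, Finset.sum_biUnion]
  · exact Finset.sum_congr rfl fun a _ =>
      Finset.sum_image fun x _ y _ h => by injection h
  · intro a _ b _ hab
    simp only [Finset.disjoint_left]
    rintro L hL hL'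
    obtain ⟨T, _, rfl⟩ := Finset.mem_image.1 hL
    obtain ⟨T', _, h⟩ := Finset.mem_image.1 hL'
    injection h.symm with h1 h2
    exact hab h1

omit [DecidableEq α] in
lemma perm_map_sum {w : α → ℝ} {s : Finset α} {L : List α} (h : L.Perm s.val.toList) :
    (L.map w).sum = ∑ a ∈ s, w a := by
  rw [(h.map w).sum_eq]
  rw [← Multiset.sum_coe, ← Multiset.map_coe, Multiset.coe_toList]
  rfl

lemma sum_prW (w : α → ℝ) (s : Finset α) (hw : ∀ a ∈ s, 0 < w a) :
    ∑ L ∈ ordsF s, prW w L = 1 := by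
  induction s using Finset.strongInduction with
  | _ s ih =>
    rcases s.eq_empty_or_nonempty with rfl | hs
    · rw [ordsF_empty]; simp [prW]
    · rw [sum_ordsF_decomp _ hs]
      have hW : 0 < ∑ b ∈ s, w b := Finset.sum_pos hw hs
      have key : ∀ a ∈ s, ∑ T ∈ ordsF (s.erase a), prW w (a :: T) = w a / ∑ b ∈ s, w b := by
        intro a ha
        have h1 : ∀ T ∈ ordsF (s.erase a), prW w (a :: T) = (w a / ∑ b ∈ s, w b) * prW w T := by
          intro T hT
          have hsum : (T.map w).sum = ∑ b ∈ s.erase a, w b := perm_map_sum (mem_ordsF.1 hT)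
          rw [prW, hsum, Finset.add_sum_erase _ w ha]
        rw [Finset.sum_congr rfl h1, ← Finset.mul_sum,
          ih (s.erase a) (Finset.erase_ssubset ha) (fun b hb => hw b (Finset.mem_of_mem_erase hb)),
          mul_one]
      rw [Finset.sum_congr rfl key, ← Finset.sum_div, div_self hW.ne']

variable [Inhabited α]

/-- The expectation of `g` at the `m`-th (0-based) element of a size-biased random order
of the finset `s`. -/
noncomputable def ExW (w g : α → ℝ) (m : ℕ) (s : Finset α) : ℝ :=
  ∑ L ∈ ordsF s, prW w L * g (L.getD m default)

lemma ExW_zero (w g : α → ℝ) {s : Finset α} (hs : s.Nonempty) (hw : ∀ a ∈ s, 0 < w a) :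
    ExW w g 0 s = ∑ a ∈ s, (w a / ∑ b ∈ s, w b) * g a := by
  rw [ExW, sum_ordsF_decomp _ hs]
  refine Finset.sum_congr rfl fun a ha => ?_
  have h1 : ∀ T ∈ ordsF (s.erase a), prW w (a :: T) * g ((a :: T).getD 0 default)
      = ((w a / ∑ b ∈ s, w b) * g a) * prW w T := by
    intro T hT
    have hsum : (T.map w).sum = ∑ b ∈ s.erase a, w b := perm_map_sum (mem_ordsF.1 hT)
    rw [prW, hsum, Finset.add_sum_erase _ w ha, List.getD_cons_zero]
    ring
  rw [Finset.sum_congr rfl h1, ← Finset.mul_sum,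
    sum_prW w _ (fun b hb => hw b (Finset.mem_of_mem_erase hb)), mul_one]

lemma ExW_succ (w g : α → ℝ) (m : ℕ) {s : Finset α} (hs : s.Nonempty)
    (hw : ∀ a ∈ s, 0 < w a) :
    ExW w g (m + 1) s = ∑ a ∈ s, (w a / ∑ b ∈ s, w b) * ExW w g m (s.erase a) := by
  rw [ExW, sum_ordsF_decomp _ hs]
  refine Finset.sum_congr rfl fun a ha => ?_
  have h1 : ∀ T ∈ ordsF (s.erase a), prW w (a :: T) * g ((a :: T).getD (m + 1) default)
      = (w a / ∑ b ∈ s, w b) * (prW w T * g (T.getD m default)) := by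
    intro T hT
    have hsum : (T.map w).sum = ∑ b ∈ s.erase a, w b := perm_map_sum (mem_ordsF.1 hT)
    rw [prW, hsum, Finset.add_sum_erase _ w ha, List.getD_cons_succ]
    ring
  rw [Finset.sum_congr rfl h1, ← Finset.mul_sum, ExW]

end ListMachinery

section TopK

lemma le_orderEmbOfFin_val {n r : ℕ} (A : Finset (Fin n)) (h : A.card = r) (i : Fin r) :
    (i : ℕ) ≤ (A.orderEmbOfFin h i : ℕ) := by
  suffices H : ∀ m (hm : m < r), m ≤ (A.orderEmbOfFin h ⟨m, hm⟩ : ℕ) by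
    have := H i.1 i.2
    simpa using this
  intro m
  induction m with
  | zero => intro hm; exact Nat.zero_le _
  | succ p ih =>
    intro hm
    have hp : p < r := by omega
    have h1 : A.orderEmbOfFin h ⟨p, hp⟩ < A.orderEmbOfFin h ⟨p + 1, hm⟩ :=
      (A.orderEmbOfFin h).strictMono (by simp [Fin.lt_def])
    have h2 := ih hp
    have h3 := Fin.lt_def.1 h1
    omega

lemma sum_le_topk {n : ℕ} (f : Fin n → ℝ) (hanti : ∀ i j : Fin n, i ≤ j → f j ≤ f i)
    (hf0 : ∀ i, 0 ≤ f i) (A : Finset (Fin n)) {k : ℕ} (hk : A.card ≤ k) :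
    ∑ j ∈ A, f j ≤ ∑ j : Fin n, if (j : ℕ) < k then f j else 0 := by
  classical
  set r := A.card with hr
  have hrn : r ≤ n := by
    simpa using Finset.card_le_card (Finset.subset_univ A)
  have hA : A = Finset.univ.map (A.orderEmbOfFin rfl).toEmbedding := by
    ext j
    simp only [Finset.mem_map, Finset.mem_univ, true_and]
    constructor
    · intro hj
      have : j ∈ Set.range (A.orderEmbOfFin (rfl : A.card = r)) := by
        rw [Finset.range_orderEmbOfFin]; exact hj
      obtain ⟨i, hi⟩ := this
      exact ⟨i, hi⟩
    · rintro ⟨i, rfl⟩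
      exact Finset.orderEmbOfFin_mem A rfl i
  rw [hA, Finset.sum_map]
  have step1 : ∀ i : Fin r, f ((A.orderEmbOfFin rfl).toEmbedding i)
      ≤ f (Fin.castLE hrn i) := by
    intro i
    refine hanti _ _ ?_
    rw [Fin.le_def]
    simpa using le_orderEmbOfFin_val A rfl i
  refine le_trans (Finset.sum_le_sum fun i _ => step1 i) ?_
  have step2 : ∑ i : Fin r, f (Fin.castLE hrn i)
      = ∑ j ∈ Finset.univ.map (Fin.castLEEmb hrn), if (j : ℕ) < k then f j else 0 := by
    rw [Finset.sum_map]
    refine Finset.sum_congr rfl fun i _ => ?_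
    have h3 : (i : ℕ) < k := lt_of_lt_of_le i.isLt hk
    simp [h3]
  rw [step2]
  refine Finset.sum_le_sum_of_subset_of_nonneg (Finset.subset_univ _) fun j _ _ => ?_
  split <;> [exact hf0 j; exact le_rfl]

end TopK

section Bounds

/-- Sum of the `k` largest weights. -/
noncomputable def Sk {n : ℕ} (wn : Fin n → ℝ) (k : ℕ) : ℝ :=
  ∑ j : Fin n, if (j : ℕ) < k then wn j else 0

/-- Sum of the `k` largest cubes. -/
noncomputable def Dk {n : ℕ} (wn : Fin n → ℝ) (k : ℕ) : ℝ :=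
  ∑ j : Fin n, if (j : ℕ) < k then wn j ^ 3 else 0

lemma ExW_bounds {n : ℕ} [Inhabited (Fin n)] (wn : Fin n → ℝ) (hpos : ∀ i, 0 < wn i)
    (hanti : ∀ i j : Fin n, i ≤ j → wn j ≤ wn i) :
    ∀ (m : ℕ) (s : Finset (Fin n)), m < s.card →
      0 < (∑ i, wn i) - Sk wn (n - s.card + m) →
      ((∑ i, wn i ^ 3) - Dk wn (n - s.card + m)) / (∑ i, wn i)
          ≤ ExW wn (fun j => wn j ^ 2) m s ∧
        ExW wn (fun j => wn j ^ 2) m s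
          ≤ (∑ i, wn i ^ 3) / ((∑ i, wn i) - Sk wn (n - s.card + m)) := by
  intro m
  induction m with
  | zero =>
    intro s hm hS
    have hs : s.Nonempty := Finset.card_pos.1 (by omega)
    have hsn : s.card ≤ n := by simpa using Finset.card_le_card (Finset.subset_univ s)
    rw [ExW_zero _ _ hs (fun a _ => hpos a)]
    set ℓ : ℝ := ∑ i, wn i with hℓ
    set Ws : ℝ := ∑ b ∈ s, wn b with hWs
    set N : ℝ := ∑ a ∈ s, wn a ^ 3 with hN
    have hWpos : 0 < Ws := Finset.sum_pos (fun a _ => hpos a) hs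
    have hsum_split : Ws + ∑ b ∈ sᶜ, wn b = ℓ := Finset.sum_add_sum_compl s wn
    have hcsum : ∑ b ∈ sᶜ, wn b ≤ Sk wn (n - s.card + 0) := by
      refine sum_le_topk wn hanti (fun i => (hpos i).le) _ ?_
      rw [Finset.card_compl]
      simp
    have hWs_ge : ℓ - Sk wn (n - s.card + 0) ≤ Ws := by linarith
    have hWs_le : Ws ≤ ℓ := by
      have h0 : 0 ≤ ∑ b ∈ sᶜ, wn b := Finset.sum_nonneg fun b _ => (hpos b).le
      linarith
    have hcube_split : N + ∑ b ∈ sᶜ, wn b ^ 3 = ∑ i, wn i ^ 3 :=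
      Finset.sum_add_sum_compl s _
    have hcsum3 : ∑ b ∈ sᶜ, wn b ^ 3 ≤ Dk wn (n - s.card + 0) := by
      refine sum_le_topk (fun j => wn j ^ 3)
        (fun i j hij => pow_le_pow_left₀ (hpos j).le (hanti i j hij) 3)
        (fun i => pow_nonneg (hpos i).le 3) _ ?_
      rw [Finset.card_compl]
      simp
    have hN_ge : (∑ i, wn i ^ 3) - Dk wn (n - s.card + 0) ≤ N := by linarith
    have hN_le : N ≤ ∑ i, wn i ^ 3 := by
      have h0 : 0 ≤ ∑ b ∈ sᶜ, wn b ^ 3 := Finset.sum_nonneg fun b _ => pow_nonneg (hpos b).le 3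
      linarith
    have hN0 : 0 ≤ N := Finset.sum_nonneg fun a _ => pow_nonneg (hpos a).le 3
    have hsum_eq : ∑ a ∈ s, (wn a / Ws) * wn a ^ 2 = N / Ws := by
      rw [hN, Finset.sum_div]
      refine Finset.sum_congr rfl fun a _ => ?_
      ring
    rw [hsum_eq]
    constructor
    · exact div_le_div₀ hN0 hN_ge (lt_of_lt_of_le hS hWs_ge) hWs_le
    · exact div_le_div₀ (le_trans hN0 hN_le) hN_le hS hWs_ge
  | succ m ih =>
    intro s hm hS
    have hs : s.Nonempty := Finset.card_pos.1 (by omega)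
    have hsn : s.card ≤ n := by simpa using Finset.card_le_card (Finset.subset_univ s)
    rw [ExW_succ _ _ _ hs (fun a _ => hpos a)]
    set ℓ : ℝ := ∑ i, wn i with hℓ
    set Ws : ℝ := ∑ b ∈ s, wn b with hWs
    have hWpos : 0 < Ws := Finset.sum_pos (fun a _ => hpos a) hs
    have hcard : ∀ a ∈ s, (s.erase a).card = s.card - 1 := fun a ha => Finset.card_erase_of_mem ha
    have hidx : ∀ a ∈ s, n - (s.erase a).card + m = n - s.card + (m + 1) := by
      intro a ha
      rw [hcard a ha]
      omega
    have hIH : ∀ a ∈ s,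
        ((∑ i, wn i ^ 3) - Dk wn (n - s.card + (m + 1))) / ℓ
            ≤ ExW wn (fun j => wn j ^ 2) m (s.erase a) ∧
          ExW wn (fun j => wn j ^ 2) m (s.erase a)
            ≤ (∑ i, wn i ^ 3) / (ℓ - Sk wn (n - s.card + (m + 1))) := by
      intro a ha
      have h1 := ih (s.erase a) (by rw [hcard a ha]; omega) (by rw [hidx a ha]; exact hS)
      rw [hidx a ha] at h1
      exact h1
    have hcoeff_sum : ∑ a ∈ s, wn a / Ws = 1 := by
      rw [← Finset.sum_div, div_self hWpos.ne']
    constructor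
    · calc ((∑ i, wn i ^ 3) - Dk wn (n - s.card + (m + 1))) / ℓ
          = ∑ a ∈ s, (wn a / Ws) * (((∑ i, wn i ^ 3) - Dk wn (n - s.card + (m + 1))) / ℓ) := by
            rw [← Finset.sum_mul, hcoeff_sum, one_mul]
        _ ≤ ∑ a ∈ s, (wn a / Ws) * ExW wn (fun j => wn j ^ 2) m (s.erase a) := by
            refine Finset.sum_le_sum fun a ha => ?_
            exact mul_le_mul_of_nonneg_left (hIH a ha).1
              (div_nonneg (hpos a).le hWpos.le)
    · calc ∑ a ∈ s, (wn a / Ws) * ExW wn (fun j => wn j ^ 2) m (s.erase a)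
          ≤ ∑ a ∈ s, (wn a / Ws) * ((∑ i, wn i ^ 3) / (ℓ - Sk wn (n - s.card + (m + 1)))) := by
            refine Finset.sum_le_sum fun a ha => ?_
            exact mul_le_mul_of_nonneg_left (hIH a ha).2
              (div_nonneg (hpos a).le hWpos.le)
        _ = (∑ i, wn i ^ 3) / (ℓ - Sk wn (n - s.card + (m + 1))) := by
            rw [← Finset.sum_mul, hcoeff_sum, one_mul]

end Bounds

section PermSum
variable {α : Type*}

lemma prW_ofFn {n : ℕ} (w : α → ℝ) (f : Fin n → α) :
    prW w (List.ofFn f)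
      = ∏ i : Fin n, w (f i) / ∑ k ∈ Finset.univ.filter (fun k => ¬ k < i), w (f k) := by
  induction n with
  | zero => simp [prW, List.ofFn_zero]
  | succ n ih =>
    rw [List.ofFn_succ, prW, List.map_ofFn, Fin.prod_univ_succ]
    congr 1
    · congr 1
      · have hfilter : (Finset.univ.filter fun k : Fin (n + 1) => ¬ k < (0 : Fin (n + 1))) =
            Finset.univ := by
          ext k; simp [Fin.not_lt_zero]
        rw [hfilter, Fin.sum_univ_succ]
        congr 1
        have : (List.ofFn (w ∘ fun i : Fin n => f i.succ)).sum
            = ∑ i : Fin n, w (f i.succ) := by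
          rw [List.sum_ofFn]; rfl
        exact this
    · rw [ih (fun i => f i.succ)]
      refine Finset.prod_congr rfl fun i _ => ?_
      congr 1
      rw [Finset.sum_filter, Finset.sum_filter, Fin.sum_univ_succ]
      have h0 : ¬ ¬ (0 : Fin (n + 1)) < i.succ := by simp [Fin.succ_pos]
      rw [if_neg h0, zero_add]
      refine Finset.sum_congr rfl fun k _ => ?_
      congr 1
      simp [Fin.succ_lt_succ_iff]

lemma denom_eq {n : ℕ} (wn : Fin n → ℝ) (σ : Equiv.Perm (Fin n)) (i : Fin n) :
    (∑ k, wn k) - ∑ k ∈ Finset.univ.filter (fun k => k < i), wn (σ k)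
      = ∑ k ∈ Finset.univ.filter (fun k => ¬ k < i), wn (σ k) := by
  have h1 : ∑ k, wn k = ∑ k, wn (σ k) := (Equiv.sum_comp σ wn).symm
  rw [h1, ← Finset.sum_filter_add_sum_filter_not Finset.univ (fun k => k < i)
    (fun k => wn (σ k))]
  ring

lemma denom_pos {n : ℕ} (wn : Fin n → ℝ) (hpos : ∀ i, 0 < wn i) (σ : Equiv.Perm (Fin n))
    (i : Fin n) :
    0 < (∑ k, wn k) - ∑ k ∈ Finset.univ.filter (fun k => k < i), wn (σ k) := by
  rw [denom_eq]
  refine Finset.sum_pos (fun k _ => hpos _) ⟨i, ?_⟩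
  simp

lemma prob_nonneg {n : ℕ} (wn : Fin n → ℝ) (hpos : ∀ i, 0 < wn i) (σ : Equiv.Perm (Fin n)) :
    0 ≤ ∏ i : Fin n, wn (σ i) /
        ((∑ k, wn k) - ∑ k ∈ Finset.univ.filter (fun k => k < i), wn (σ k)) :=
  Finset.prod_nonneg fun i _ => div_nonneg (hpos _).le (denom_pos wn hpos σ i).le

end PermSum

section PermToExW
variable {n : ℕ}

lemma ofFn_mem_ordsF (σ : Equiv.Perm (Fin n)) :
    List.ofFn ⇑σ ∈ ordsF (Finset.univ : Finset (Fin n)) := by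
  rw [mem_ordsF]
  refine List.perm_of_nodup_nodup_toFinset_eq (List.nodup_ofFn.2 σ.injective) ?_ ?_
  · rw [← Multiset.coe_nodup, Multiset.coe_toList]
    exact Finset.univ.nodup
  · ext b
    simp only [List.mem_toFinset, List.mem_ofFn, Multiset.mem_toList]
    constructor
    · intro _; exact Multiset.mem_toList.1 (by rw [Multiset.mem_toList]; exact Finset.mem_univ_val b)
    · intro _; exact ⟨σ.symm b, by simp⟩

lemma ofFn_length_aux {L : List (Fin n)} (hL : L ∈ ordsF (Finset.univ : Finset (Fin n))) :
    L.length = n := by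
  have h := (mem_ordsF.1 hL).length_eq
  rw [Multiset.length_toList] at h
  simpa using h

lemma sum_perm_eq_ExW [Inhabited (Fin n)] (wn g : Fin n → ℝ) (m : ℕ) (hm : m < n) :
    ∑ σ : Equiv.Perm (Fin n),
        (∏ i : Fin n, wn (σ i) /
          ((∑ k, wn k) - ∑ k ∈ Finset.univ.filter (fun k => k < i), wn (σ k))) * g (σ ⟨m, hm⟩)
      = ExW wn g m Finset.univ := by
  rw [ExW]
  refine Finset.sum_bij (fun σ _ => List.ofFn ⇑σ) (fun σ _ => ofFn_mem_ordsF σ) ?_ ?_ ?_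
  · intro σ _ τ _ h
    have : ⇑σ = ⇑τ := by
      funext i
      have := congrArg (fun L => L.getD (i : ℕ) default) h
      simpa [List.getD_eq_getElem, List.getElem_ofFn] using this
    exact Equiv.coe_fn_injective this
  · intro L hL
    have hlen : L.length = n := ofFn_length_aux hL
    have hnodup : L.Nodup := by
      refine (mem_ordsF.1 hL).symm.nodup ?_
      rw [← Multiset.coe_nodup, Multiset.coe_toList]
      exact Finset.univ.nodup
    have hinj : Function.Injective fun i : Fin n => L.get (Fin.cast hlen.symm i) := by
      intro a b hab
      have := List.nodup_iff_injective_get.1 hnodup hab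
      exact Fin.cast_injective _ this
    have hbij := (Finite.injective_iff_bijective).1 hinj
    refine ⟨Equiv.ofBijective _ hbij, Finset.mem_univ _, ?_⟩
    apply List.ext_get (by simp [hlen])
    intro i h1 h2
    simp [Equiv.ofBijective]
  · intro σ _
    congr 1
    · rw [prW_ofFn]
      exact Finset.prod_congr rfl fun i _ => by rw [denom_eq]
    · congr 1
      rw [List.getD_eq_getElem _ _ (by simp [hm]), List.getElem_ofFn]

end PermToExW

section IntegralSB

lemma integral_sbMeasure {n : ℕ} (wn : Fin n → ℝ) (hpos : ∀ σ : Equiv.Perm (Fin n),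
      0 ≤ ∏ i : Fin n,
        wn (σ i) / ((∑ k, wn k) - ∑ k ∈ Finset.univ.filter fun k => k < i, wn (σ k)))
    (f : (Fin n → Fin n) → ℝ) :
    ∫ ω, f ω ∂(sbMeasure n wn)
      = ∑ σ : Equiv.Perm (Fin n),
          (∏ i : Fin n, wn (σ i) /
            ((∑ k, wn k) - ∑ k ∈ Finset.univ.filter fun k => k < i, wn (σ k))) * f ⇑σ := by
  rw [sbMeasure, Measure.sum_fintype]
  rw [MeasureTheory.integral_finset_sum_measure ?_]
  · refine Finset.sum_congr rfl fun σ _ => ?_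
    rw [integral_smul_measure, integral_dirac, ENNReal.toReal_ofReal (hpos σ)]
    rfl
  · intro σ _
    have : IsFiniteMeasure (ENNReal.ofReal (∏ i : Fin n,
        wn (σ i) / ((∑ k, wn k) - ∑ k ∈ Finset.univ.filter fun k => k < i, wn (σ k))) •
        Measure.dirac ⇑σ) := by
      constructor
      simp [ENNReal.ofReal_lt_top, lt_top_iff_ne_top]
    exact Integrable.of_finite

end IntegralSB

section Asymp

lemma tendsto_div_of_isLittleO {F : ℕ → ℝ} {c : ℝ}
    (h : (fun n => F n - c * n) =o[atTop] fun n : ℕ => (n : ℝ)) :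
    Tendsto (fun n => F n / n) atTop (𝓝 c) := by
  have hcond : ∀ᶠ n : ℕ in atTop, ((n : ℝ) = 0 → F n - c * n = 0) := by
    filter_upwards [eventually_gt_atTop 0] with n hn h0
    exact absurd h0 (Nat.cast_ne_zero.2 hn.ne')
  have h1 : Tendsto (fun n : ℕ => (F n - c * n) / n) atTop (𝓝 0) :=
    (isLittleO_iff_tendsto' hcond).1 h
  have h2 : (fun n : ℕ => (F n - c * n) / n + c) =ᶠ[atTop] fun n => F n / n := by
    filter_upwards [eventually_gt_atTop 0] with n hn
    have hne : (n : ℝ) ≠ 0 := Nat.cast_ne_zero.2 hn.ne'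
    field_simp
    ring
  have h3 : Tendsto (fun n : ℕ => (F n - c * n) / n + c) atTop (𝓝 (0 + c)) :=
    h1.add tendsto_const_nhds
  rw [zero_add] at h3
  exact h3.congr' h2

lemma rpow23_isBigO : (fun n : ℕ => (n : ℝ) ^ ((2 : ℝ) / 3)) =O[atTop] fun n : ℕ => (n : ℝ) := by
  refine IsBigO.of_bound 1 ?_
  filter_upwards [eventually_ge_atTop 1] with n hn
  have h1 : (1 : ℝ) ≤ (n : ℝ) := by exact_mod_cast hn
  have h2 : (n : ℝ) ^ ((2 : ℝ) / 3) ≤ (n : ℝ) ^ (1 : ℝ) :=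
    Real.rpow_le_rpow_of_exponent_le h1 (by norm_num)
  rw [Real.rpow_one] at h2
  have h0 : (0 : ℝ) ≤ (n : ℝ) ^ ((2 : ℝ) / 3) := Real.rpow_nonneg (Nat.cast_nonneg n) _
  rw [Real.norm_eq_abs, Real.norm_eq_abs, abs_of_nonneg h0, abs_of_nonneg (by linarith)]
  linarith

lemma one_isBigO_n : (fun _ : ℕ => (1 : ℝ)) =O[atTop] fun n : ℕ => (n : ℝ) := by
  refine IsBigO.of_bound 1 ?_
  filter_upwards [eventually_ge_atTop 1] with n hn
  have h1 : (1 : ℝ) ≤ (n : ℝ) := by exact_mod_cast hn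
  simpa [abs_of_nonneg (by linarith : (0:ℝ) ≤ (n:ℝ))] using h1

/-- The truncated cube function, as a bounded continuous function. -/
noncomputable def truncCube (T : ℕ) : BoundedContinuousFunction ℝ ℝ :=
  BoundedContinuousFunction.ofNormedAddCommGroup (fun x => min (max x 0) (T : ℝ) ^ 3)
    (by continuity) ((T : ℝ) ^ 3) (fun x => by
      have h0 : (0:ℝ) ≤ min (max x 0) (T:ℝ) := le_min (le_max_right x 0) (Nat.cast_nonneg T)
      have h1 : min (max x 0) (T:ℝ) ≤ (T:ℝ) := min_le_right _ _
      rw [Real.norm_eq_abs, abs_of_nonneg (pow_nonneg h0 3)]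
      exact pow_le_pow_left₀ h0 h1 3)

lemma truncCube_apply (T : ℕ) (x : ℝ) : truncCube T x = min (max x 0) (T : ℝ) ^ 3 := rfl

lemma truncCube_nonneg (T : ℕ) (x : ℝ) : 0 ≤ truncCube T x := by
  rw [truncCube_apply]
  exact pow_nonneg (le_min (le_max_right x 0) (Nat.cast_nonneg T)) 3

lemma truncCube_le_cube {T : ℕ} {x : ℝ} (hx : 0 < x) : truncCube T x ≤ x ^ 3 := by
  rw [truncCube_apply]
  have h0 : (0:ℝ) ≤ min (max x 0) (T:ℝ) := le_min (le_max_right x 0) (Nat.cast_nonneg T)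
  have h1 : min (max x 0) (T:ℝ) ≤ x := le_trans (min_le_left _ _) (by rw [max_eq_left hx.le])
  exact pow_le_pow_left₀ h0 h1 3

lemma truncCube_le_T (T : ℕ) (x : ℝ) : truncCube T x ≤ (T : ℝ) ^ 3 := by
  rw [truncCube_apply]
  exact pow_le_pow_left₀ (le_min (le_max_right x 0) (Nat.cast_nonneg T)) (min_le_right _ _) 3

lemma tendsto_integral_truncCube {μ : Measure ℝ} (hpos : ∀ᵐ x ∂μ, 0 < x)
    (hint3 : Integrable (fun x => x ^ 3) μ) :
    Tendsto (fun T : ℕ => ∫ x, truncCube T x ∂μ) atTop (𝓝 (∫ x, x ^ 3 ∂μ)) := by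
  refine tendsto_integral_of_dominated_convergence (fun x => |x ^ 3|)
    (fun T => ((truncCube T).continuous).aestronglyMeasurable) hint3.abs ?_ ?_
  · intro T
    refine Filter.Eventually.of_forall fun x => ?_
    rw [truncCube_apply, Real.norm_eq_abs]
    have h0 : (0:ℝ) ≤ min (max x 0) (T:ℝ) := le_min (le_max_right x 0) (Nat.cast_nonneg T)
    have h1 : min (max x 0) (T:ℝ) ≤ |x| :=
      le_trans (min_le_left _ _) (max_le (le_abs_self x) (abs_nonneg x))
    rw [abs_of_nonneg (pow_nonneg h0 3)]
    calc ((x ⊔ 0) ⊓ (T:ℝ)) ^ 3 ≤ |x| ^ 3 := pow_le_pow_left₀ h0 h1 3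
      _ = |x ^ 3| := (abs_pow x 3).symm
  · filter_upwards [hpos] with x hx
    refine Tendsto.congr' ?_ (tendsto_const_nhds : Tendsto (fun _ : ℕ => x ^ 3) atTop (𝓝 (x ^ 3)))
    filter_upwards [eventually_ge_atTop ⌈x⌉₊] with T hT
    have hxT : x ≤ (T : ℝ) := le_trans (Nat.le_ceil x) (Nat.cast_le.2 hT)
    rw [truncCube_apply, max_eq_left hx.le, min_eq_left hxT]

end Asymp

end AuxProof

/-- Lemma of the paper: `E[w_{v(l)}²] = C + o(1)` for `l = o(n)`. -/
theorem mean_square_size_biased_weight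
    (w : ∀ n : ℕ, Fin n → ℝ) (μ : Measure ℝ) (hC : CondC w μ)
    (l : ℕ → ℕ) (hl0 : ∀ n, 1 ≤ l n)
    (hl : (fun n => (l n : ℝ)) =o[atTop] fun n : ℕ => (n : ℝ)) :
    (fun n => (∫ ω, sbW (w n) ω (l n) ^ 2 ∂sbMeasure n (w n)) - Cconst μ) =o[atTop]
      fun _ : ℕ => (1 : ℝ) := by
  classical
  haveI := hC.isProb
  -- positivity of the first moment
  have hc1pos : 0 < ∫ x, x ∂μ := by
    have hx_nonneg : 0 ≤ᵐ[μ] fun x : ℝ => x := hC.pos.mono fun x hx => hx.le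
    have hint1 : Integrable (fun x : ℝ => x) μ := by
      refine ((integrable_const (1 : ℝ)).add hC.int3.abs).mono'
        measurable_id.aestronglyMeasurable ?_
      refine Filter.Eventually.of_forall fun x => ?_
      simp only [Pi.add_apply, Real.norm_eq_abs, id]
      have h3 : |x ^ 3| = |x| ^ 3 := abs_pow x 3
      rcases le_total |x| 1 with h | h
      · have h4 : (0:ℝ) ≤ |x ^ 3| := abs_nonneg _
        linarith
      · have h6 : (0:ℝ) ≤ (|x| - 1) * (|x| ^ 2 + |x|) :=
          mul_nonneg (by linarith) (by positivity)
        have h5 : |x| ≤ |x| ^ 3 := by nlinarith [h6]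
        linarith
    rw [integral_pos_iff_support_of_nonneg_ae hx_nonneg hint1]
    have h1 : {x : ℝ | 0 < x} ⊆ Function.support (fun x : ℝ => x) := fun x hx => ne_of_gt hx
    refine lt_of_lt_of_le ?_ (measure_mono h1)
    by_contra hcon
    push_neg at hcon
    have h0 : μ {x : ℝ | 0 < x} = 0 := le_antisymm (by simpa using hcon) (zero_le)
    have h2 : μ {x : ℝ | ¬ 0 < x} = 0 := by
      have := hC.pos
      rwa [MeasureTheory.ae_iff] at this
    have huniv : μ Set.univ ≤ μ {x : ℝ | 0 < x} + μ {x : ℝ | ¬ 0 < x} := by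
      refine le_trans (measure_mono ?_) (measure_union_le _ _)
      intro x _
      by_cases h : 0 < x
      · exact Or.inl h
      · exact Or.inr h
    rw [h0, h2, add_zero, measure_univ] at huniv
    exact absurd huniv (by simp)
  -- first-order limits
  have hell : Tendsto (fun n => ell w n / n) atTop (𝓝 (∫ x, x ∂μ)) :=
    tendsto_div_of_isLittleO (hC.ell_asymp.trans_isBigO rpow23_isBigO)
  have hcube : Tendsto (fun n => (∑ i : Fin n, w n i ^ 3) / n) atTop (𝓝 (∫ x, x ^ 3 ∂μ)) :=
    tendsto_div_of_isLittleO (hC.cube_asymp.trans_isBigO one_isBigO_n)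
  have hsq : Tendsto (fun n => (∑ i : Fin n, w n i ^ 2) / n) atTop (𝓝 (∫ x, x ^ 2 ∂μ)) :=
    tendsto_div_of_isLittleO (hC.sq_asymp.trans_isBigO rpow23_isBigO)
  have hln : Tendsto (fun n => (l n : ℝ) / n) atTop (𝓝 0) := by
    have hcond : ∀ᶠ n : ℕ in atTop, ((n : ℝ) = 0 → (l n : ℝ) = 0) := by
      filter_upwards [eventually_gt_atTop 0] with n hn h0
      exact absurd h0 (Nat.cast_ne_zero.2 hn.ne')
    exact (isLittleO_iff_tendsto' hcond).1 hl
  -- nonnegativity of Sk, Dk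
  have hSk0 : ∀ n : ℕ, 0 ≤ Sk (w n) (l n - 1) := by
    intro n
    refine Finset.sum_nonneg fun j _ => ?_
    split <;> [exact (hC.w_pos n j).le; exact le_rfl]
  have hDk0 : ∀ n : ℕ, 0 ≤ Dk (w n) (l n - 1) := by
    intro n
    refine Finset.sum_nonneg fun j _ => ?_
    split <;> [exact pow_nonneg (hC.w_pos n j).le 3; exact le_rfl]
  have hcardk : ∀ (n k : ℕ),
      (((Finset.univ.filter fun j : Fin n => (j : ℕ) < k).card : ℕ) : ℝ) ≤ (k : ℝ) := by
    intro n k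
    have hle : (Finset.univ.filter fun j : Fin n => (j : ℕ) < k).card ≤ (Finset.range k).card := by
      refine Finset.card_le_card_of_injOn (fun j => (j : ℕ)) ?_ ?_
      · intro j hj
        have hj' : (j : ℕ) < k := by simpa using hj
        simpa using hj'
      · intro a _ b _ hab
        exact Fin.val_injective hab
    rw [Finset.card_range] at hle
    exact_mod_cast hle
  -- Sk (l n - 1) is o(n)
  have hSk : Tendsto (fun n => Sk (w n) (l n - 1) / n) atTop (𝓝 0) := by
    have hub : ∀ᶠ n : ℕ in atTop, Sk (w n) (l n - 1) / n
        ≤ Real.sqrt (((l n : ℝ) / n) * ((∑ i : Fin n, w n i ^ 2) / n)) := by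
      filter_upwards [eventually_gt_atTop 0] with n hn
      have hnpos : (0:ℝ) < n := by exact_mod_cast hn
      have hcs := Finset.sum_mul_sq_le_sq_mul_sq Finset.univ
        (fun j : Fin n => if (j : ℕ) < l n - 1 then (1:ℝ) else 0) (w n)
      have h1 : ∑ j : Fin n, (if (j : ℕ) < l n - 1 then (1:ℝ) else 0) * w n j
          = Sk (w n) (l n - 1) := by
        refine Finset.sum_congr rfl fun j _ => ?_
        split <;> simp
      have h2 : ∑ j : Fin n, (if (j : ℕ) < l n - 1 then (1:ℝ) else 0) ^ 2
          = (((Finset.univ.filter fun j : Fin n => (j : ℕ) < l n - 1).card : ℕ) : ℝ) := by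
        rw [← Finset.sum_boole]
        refine Finset.sum_congr rfl fun j _ => ?_
        split <;> simp
      rw [h1, h2] at hcs
      have hsq0 : (0:ℝ) ≤ ∑ i : Fin n, w n i ^ 2 :=
        Finset.sum_nonneg fun i _ => sq_nonneg _
      have hcs2 : Sk (w n) (l n - 1) ^ 2 ≤ (l n : ℝ) * ∑ i : Fin n, w n i ^ 2 := by
        refine hcs.trans ?_
        refine mul_le_mul_of_nonneg_right ?_ hsq0
        refine (hcardk n (l n - 1)).trans ?_
        exact_mod_cast Nat.cast_le.2 (Nat.sub_le (l n) 1)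
      have hkey : (Sk (w n) (l n - 1) / n) ^ 2
          ≤ ((l n : ℝ) / n) * ((∑ i : Fin n, w n i ^ 2) / n) := by
        rw [div_pow]
        have heq : ((l n : ℝ) / n) * ((∑ i : Fin n, w n i ^ 2) / n)
            = ((l n : ℝ) * ∑ i : Fin n, w n i ^ 2) / (n:ℝ) ^ 2 := by
          rw [div_mul_div_comm, ← sq]
        rw [heq]
        exact div_le_div_of_nonneg_right hcs2 (by positivity)
      calc Sk (w n) (l n - 1) / n
          = Real.sqrt ((Sk (w n) (l n - 1) / n) ^ 2) := by
            rw [Real.sqrt_sq (div_nonneg (hSk0 n) hnpos.le)]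
        _ ≤ Real.sqrt (((l n : ℝ) / n) * ((∑ i : Fin n, w n i ^ 2) / n)) :=
            Real.sqrt_le_sqrt hkey
    have hlim : Tendsto
        (fun n : ℕ => Real.sqrt (((l n : ℝ) / n) * ((∑ i : Fin n, w n i ^ 2) / n)))
        atTop (𝓝 0) := by
      have := (hln.mul hsq).sqrt
      simpa using this
    refine tendsto_of_tendsto_of_tendsto_of_le_of_le' tendsto_const_nhds hlim ?_ hub
    exact Filter.Eventually.of_forall fun n => div_nonneg (hSk0 n) (Nat.cast_nonneg n)
  -- Dk (l n - 1) is o(n)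
  have hDk : Tendsto (fun n => Dk (w n) (l n - 1) / n) atTop (𝓝 0) := by
    rw [NormedAddCommGroup.tendsto_nhds_zero]
    intro ε hε
    have hDCT := tendsto_integral_truncCube hC.pos hC.int3
    have hev : ∀ᶠ T : ℕ in atTop,
        (∫ x, x ^ 3 ∂μ) - ∫ x, truncCube T x ∂μ < ε / 2 := by
      have h' : Tendsto (fun T : ℕ => (∫ x, x ^ 3 ∂μ) - ∫ x, truncCube T x ∂μ)
          atTop (𝓝 0) := by
        have h'' := (tendsto_const_nhds : Tendsto (fun _ : ℕ => ∫ x, x ^ 3 ∂μ) atTop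
          (𝓝 (∫ x, x ^ 3 ∂μ))).sub hDCT
        rwa [sub_self] at h''
      exact h'.eventually_lt_const (by linarith)
    obtain ⟨T, hT⟩ := hev.exists
    have hblim : Tendsto (fun n : ℕ => ((l n : ℝ) / n) * (T : ℝ) ^ 3
        + ((∑ i : Fin n, w n i ^ 3) / n - (∑ i : Fin n, truncCube T (w n i)) / n)) atTop
        (𝓝 (0 * (T:ℝ) ^ 3 + ((∫ x, x ^ 3 ∂μ) - ∫ x, truncCube T x ∂μ))) :=
      (hln.mul tendsto_const_nhds).add (hcube.sub (hC.weak (truncCube T)))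
    have hbe : ∀ᶠ n : ℕ in atTop, ((l n : ℝ) / n) * (T : ℝ) ^ 3
        + ((∑ i : Fin n, w n i ^ 3) / n - (∑ i : Fin n, truncCube T (w n i)) / n) < ε := by
      refine hblim.eventually_lt_const ?_
      rw [zero_mul, zero_add]
      linarith
    filter_upwards [hbe, eventually_gt_atTop 0] with n hbn hn
    have hnpos : (0:ℝ) < n := by exact_mod_cast hn
    have hkey : Dk (w n) (l n - 1)
        ≤ (l n : ℝ) * (T : ℝ) ^ 3
          + ((∑ i : Fin n, w n i ^ 3) - ∑ i : Fin n, truncCube T (w n i)) := by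
      have hstep : Dk (w n) (l n - 1)
          ≤ (∑ j : Fin n, if (j : ℕ) < l n - 1 then (T : ℝ) ^ 3 else 0)
            + ∑ j : Fin n, (w n j ^ 3 - truncCube T (w n j)) := by
        rw [Dk, ← Finset.sum_add_distrib]
        refine Finset.sum_le_sum fun j _ => ?_
        have htr := truncCube_le_T T (w n j)
        have htr2 := truncCube_le_cube (T := T) (hC.w_pos n j)
        split <;> linarith
      refine hstep.trans ?_
      have hconst : (∑ j : Fin n, if (j : ℕ) < l n - 1 then (T : ℝ) ^ 3 else 0)
          ≤ (l n : ℝ) * (T : ℝ) ^ 3 := by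
        rw [← Finset.sum_filter, Finset.sum_const, nsmul_eq_mul]
        refine mul_le_mul_of_nonneg_right ?_ (by positivity)
        refine (hcardk n (l n - 1)).trans ?_
        exact_mod_cast Nat.cast_le.2 (Nat.sub_le (l n) 1)
      have hsplit : ∑ j : Fin n, (w n j ^ 3 - truncCube T (w n j))
          = (∑ i : Fin n, w n i ^ 3) - ∑ i : Fin n, truncCube T (w n i) :=
        Finset.sum_sub_distrib _ _
      linarith
    have hdivle : Dk (w n) (l n - 1) / n
        ≤ ((l n : ℝ) * (T : ℝ) ^ 3
          + ((∑ i : Fin n, w n i ^ 3) - ∑ i : Fin n, truncCube T (w n i))) / n :=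
      div_le_div_of_nonneg_right hkey hnpos.le
    have heq : ((l n : ℝ) * (T : ℝ) ^ 3
          + ((∑ i : Fin n, w n i ^ 3) - ∑ i : Fin n, truncCube T (w n i))) / n
        = ((l n : ℝ) / n) * (T : ℝ) ^ 3
          + ((∑ i : Fin n, w n i ^ 3) / n - (∑ i : Fin n, truncCube T (w n i)) / n) := by
      rw [add_div, sub_div, mul_div_right_comm]
    rw [Real.norm_eq_abs, abs_of_nonneg (div_nonneg (hDk0 n) hnpos.le)]
    calc Dk (w n) (l n - 1) / n ≤ _ := hdivle
      _ = _ := heq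
      _ < ε := hbn
  -- limits of the lower and upper bounds
  have hC_ne : (∫ x, x ∂μ) ≠ 0 := hc1pos.ne'
  have hlo : Tendsto (fun n : ℕ =>
      ((∑ i : Fin n, w n i ^ 3) - Dk (w n) (l n - 1)) / ell w n) atTop (𝓝 (Cconst μ)) := by
    have hnum : Tendsto (fun n : ℕ =>
        (∑ i : Fin n, w n i ^ 3) / n - Dk (w n) (l n - 1) / n) atTop
        (𝓝 ((∫ x, x ^ 3 ∂μ) - 0)) := hcube.sub hDk
    have hmain := hnum.div hell hC_ne
    have heq : (fun n : ℕ =>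
        ((∑ i : Fin n, w n i ^ 3) / n - Dk (w n) (l n - 1) / n) / (ell w n / n))
        =ᶠ[atTop] fun n : ℕ => ((∑ i : Fin n, w n i ^ 3) - Dk (w n) (l n - 1)) / ell w n := by
      filter_upwards [eventually_gt_atTop 0] with n hn
      have hne : (n : ℝ) ≠ 0 := Nat.cast_ne_zero.2 hn.ne'
      rcases eq_or_ne (ell w n) 0 with h | h
      · rw [h, zero_div, div_zero, div_zero]
      · field_simp
    have := hmain.congr' heq
    simpa [Cconst] using this
  have hhi : Tendsto (fun n : ℕ =>
      (∑ i : Fin n, w n i ^ 3) / (ell w n - Sk (w n) (l n - 1))) atTop (𝓝 (Cconst μ)) := by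
    have hden : Tendsto (fun n : ℕ => ell w n / n - Sk (w n) (l n - 1) / n) atTop
        (𝓝 ((∫ x, x ∂μ) - 0)) := hell.sub hSk
    have hmain := hcube.div hden (by rw [sub_zero]; exact hC_ne)
    have heq : (fun n : ℕ =>
        ((∑ i : Fin n, w n i ^ 3) / n) / (ell w n / n - Sk (w n) (l n - 1) / n))
        =ᶠ[atTop] fun n : ℕ => (∑ i : Fin n, w n i ^ 3) / (ell w n - Sk (w n) (l n - 1)) := by
      filter_upwards [eventually_gt_atTop 0] with n hn
      have hne : (n : ℝ) ≠ 0 := Nat.cast_ne_zero.2 hn.ne'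
      rw [← sub_div]
      rcases eq_or_ne (ell w n - Sk (w n) (l n - 1)) 0 with h | h
      · rw [h, zero_div, div_zero, div_zero]
      · field_simp
    have := hmain.congr' heq
    simpa [Cconst] using this
  -- eventual positivity of the denominator
  have hden_pos : ∀ᶠ n : ℕ in atTop, 0 < ell w n - Sk (w n) (l n - 1) := by
    have h2 : Tendsto (fun n : ℕ => ell w n / n - Sk (w n) (l n - 1) / n) atTop
        (𝓝 ((∫ x, x ∂μ) - 0)) := hell.sub hSk
    have h3 : ∀ᶠ n : ℕ in atTop, 0 < ell w n / n - Sk (w n) (l n - 1) / n :=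
      h2.eventually_const_lt (by rw [sub_zero]; exact hc1pos)
    filter_upwards [h3, eventually_gt_atTop 0] with n h hn
    have hnpos : (0:ℝ) < n := by exact_mod_cast hn
    have h4 : 0 < (ell w n - Sk (w n) (l n - 1)) / n := by rwa [sub_div]
    have h5 := mul_pos h4 hnpos
    rwa [div_mul_cancel₀ _ hnpos.ne'] at h5
  -- eventually l n < n
  have hlt : ∀ᶠ n : ℕ in atTop, l n - 1 < n := by
    have h1 : ∀ᶠ n : ℕ in atTop, (l n : ℝ) / n < 1 := hln.eventually_lt_const one_pos
    filter_upwards [h1, eventually_gt_atTop 0] with n h hn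
    have hnpos : (0:ℝ) < n := by exact_mod_cast hn
    have h2 : (l n : ℝ) < n := by
      have := (div_lt_one hnpos).1 h
      exact this
    have h3 : l n < n := by exact_mod_cast h2
    omega
  -- the sandwich
  have hsandwich : ∀ᶠ n : ℕ in atTop,
      ((∑ i : Fin n, w n i ^ 3) - Dk (w n) (l n - 1)) / ell w n
          ≤ (∫ ω, sbW (w n) ω (l n) ^ 2 ∂sbMeasure n (w n)) ∧
        (∫ ω, sbW (w n) ω (l n) ^ 2 ∂sbMeasure n (w n))
          ≤ (∑ i : Fin n, w n i ^ 3) / (ell w n - Sk (w n) (l n - 1)) := by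
    filter_upwards [hden_pos, hlt, eventually_gt_atTop 0] with n hSpos hm hn
    haveI : Inhabited (Fin n) := ⟨⟨0, hn⟩⟩
    have hwp : ∀ i, 0 < w n i := hC.w_pos n
    have hfun : (fun ω : Fin n → Fin n => sbW (w n) ω (l n) ^ 2)
        = fun ω : Fin n → Fin n => (fun j : Fin n => w n j ^ 2) (ω ⟨l n - 1, hm⟩) := by
      funext ω
      have h0 : l n ≠ 0 := Nat.one_le_iff_ne_zero.1 (hl0 n)
      rw [sbW, dif_pos hm, if_neg h0]
    have hint : (∫ ω, sbW (w n) ω (l n) ^ 2 ∂sbMeasure n (w n))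
        = ExW (w n) (fun j : Fin n => w n j ^ 2) (l n - 1) Finset.univ := by
      calc (∫ ω, sbW (w n) ω (l n) ^ 2 ∂sbMeasure n (w n))
          = ∫ ω, (fun j : Fin n => w n j ^ 2) (ω ⟨l n - 1, hm⟩) ∂(sbMeasure n (w n)) := by
            exact congrArg (MeasureTheory.integral (sbMeasure n (w n))) hfun
        _ = ∑ σ : Equiv.Perm (Fin n),
            (∏ i : Fin n, w n (σ i) /
              ((∑ k, w n k) - ∑ k ∈ Finset.univ.filter (fun k => k < i), w n (σ k)))
              * (fun j : Fin n => w n j ^ 2) (σ ⟨l n - 1, hm⟩) :=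
            integral_sbMeasure (w n) (prob_nonneg (w n) hwp) _
        _ = ExW (w n) (fun j : Fin n => w n j ^ 2) (l n - 1) Finset.univ :=
            sum_perm_eq_ExW (w n) (fun j : Fin n => w n j ^ 2) (l n - 1) hm
    have hcardu : (Finset.univ : Finset (Fin n)).card = n := by simp
    have hidx : n - (Finset.univ : Finset (Fin n)).card + (l n - 1) = l n - 1 := by
      rw [hcardu]; omega
    have hb := ExW_bounds (w n) hwp (hC.w_anti n) (l n - 1) Finset.univ
      (by rw [hcardu]; exact hm) (by rw [hidx]; exact hSpos)
    rw [hidx] at hb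
    rw [hint]
    exact hb
  have hEnlim : Tendsto (fun n : ℕ => ∫ ω, sbW (w n) ω (l n) ^ 2 ∂sbMeasure n (w n)) atTop
      (𝓝 (Cconst μ)) :=
    tendsto_of_tendsto_of_tendsto_of_le_of_le' hlo hhi
      (hsandwich.mono fun n h => h.1) (hsandwich.mono fun n h => h.2)
  rw [Asymptotics.isLittleO_one_iff]
  simpa using hEnlim.sub_const (Cconst μ)
end
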